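/- arXiv:1705.05509 — 3 statements merged into one kernel-verified Lean document; each statement's English description precedes it below -/
import Mathlib

section
/- Let n = 4f+1 be an odd prime with f odd, and suppose there exist integers x, y with n = x² + 4y², y = −1, such that the cyclotomic numbers of order 4 with respect to the generator α satisfy the f-odd table. Let e(0), e(1), e(2) ∈ {0,1} with e(0)+e(1)+e(2) ≡ 0 (mod 2), and let (a_0,a_1,a_2,a_3) be one of the tuples (s_1,s_2,s_2,s_1), (s_2,s_1,s_1,s_2), (s_2,s_6,s_6,s_2), (s_6,s_2,s_2,s_6), (s_4,s_5,s_5,s_4), (s_5,s_4,s_4,s_5), (s_5,s_3,s_3,s_5), (s_3,s_5,s_5,s_3). Then the quaternary sequence u of length 2n from Construction I satisfies R_u(τ) = ±2 for all 1 ≤ τ < 2n; in particular u is optimal. -/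
/-- Cross-correlation of two sequences of length `N` over `ℤ_H`, with `ξ = exp(2πi/H)`. -/
noncomputable def crossCorr (H N : ℕ) (s t : ZMod N → ZMod H) (τ : ZMod N) : ℂ :=
  ∑ i ∈ Finset.range N,
    Complex.exp (2 * (Real.pi : ℂ) * Complex.I / (H : ℂ)) ^ ((s (i : ZMod N) - t ((i : ZMod N) + τ)).val)

/-- Cross-correlation of two binary sequences of length `N` (an integer). -/
def binCorr (N : ℕ) (s t : ZMod N → ZMod 2) (τ : ZMod N) : ℤ :=
  ∑ i ∈ Finset.range N, (-1 : ℤ) ^ ((s (i : ZMod N) + t ((i : ZMod N) + τ)).val)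

/-- Cross-correlation of two quaternary sequences of length `N`, with `ξ = √-1`. -/
noncomputable def quadCorr (N : ℕ) (s t : ZMod N → ZMod 4) (τ : ZMod N) : ℂ :=
  ∑ i ∈ Finset.range N, Complex.I ^ ((s (i : ZMod N) - t ((i : ZMod N) + τ)).val)

/-- Interleaving `u = I(a, b)`: `u(2i) = a(i)`, `u(2i+1) = b(i)`. -/
def interleaveSeq {H : ℕ} (n : ℕ) (a b : ZMod n → ZMod H) : ZMod (2 * n) → ZMod H :=
  fun k => if k.val % 2 = 0 then a ((k.val / 2 : ℕ) : ZMod n) else b ((k.val / 2 : ℕ) : ZMod n)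

/-- The inverse Gray mapping `φ⁻¹ : ℤ₂ × ℤ₂ → ℤ₄`. -/
def grayInv (a b : ZMod 2) : ZMod 4 :=
  if a = 0 then (if b = 0 then 0 else 1) else (if b = 0 then 3 else 2)

/-- Construction I: the quaternary sequence of length `2n` built from
`a₀, a₁, a₂, a₃` and bits `e₀, e₁, e₂`. -/
def constructionI (n : ℕ) (a0 a1 a2 a3 : ZMod n → ZMod 2)
    (e0 e1 e2 : ZMod 2) : ZMod (2 * n) → ZMod 4 :=
  let lam : ZMod n := (((n + 1) / 2 : ℕ) : ZMod n)
  let c := interleaveSeq n a0 (fun i => e0 + a1 (i + lam))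
  let d := interleaveSeq n (fun i => e1 + a2 i) (fun i => e2 + a3 (i + lam))
  fun i => grayInv (c i) (d i)

/-- The cyclotomic class `D_i` of order 4 w.r.t. the generator `α`. -/
def cycClass (n f : ℕ) (α : ZMod n) (i : ℕ) : Set (ZMod n) :=
  {x | ∃ t < f, x = α ^ (4 * t + i)}

/-- The cyclotomic number `(i, j)` of order 4: `|(D_i + 1) ∩ D_j|`. -/
noncomputable def cycNum (n f : ℕ) (α : ZMod n) (i j : ℕ) : ℕ :=
  Set.ncard {x : ZMod n | x - 1 ∈ cycClass n f α i ∧ x ∈ cycClass n f α j}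

open Classical in
/-- The binary sequence of length `n` with support set `D_i ∪ D_j`. -/
noncomputable def cycSeq (n f : ℕ) (α : ZMod n) (i j : ℕ) : ZMod n → ZMod 2 :=
  fun x => if x ∈ cycClass n f α i ∪ cycClass n f α j then 1 else 0

/-- Six binary sequences with supports `D₀∪D₁, D₀∪D₂, D₀∪D₃, D₁∪D₂, D₁∪D₃, D₂∪D₃`. -/
noncomputable def sixSeq (n f : ℕ) (α : ZMod n) : Fin 6 → ZMod n → ZMod 2
  | 0 => cycSeq n f α 0 1
  | 1 => cycSeq n f α 0 2
  | 2 => cycSeq n f α 0 3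
  | 3 => cycSeq n f α 1 2
  | 4 => cycSeq n f α 1 3
  | 5 => cycSeq n f α 2 3

/-- 16 times the cyclotomic numbers of order 4 in the `f` odd case. -/
def oddTable16 (n x y : ℤ) (i j : ℕ) : ℤ :=
  match i, j with
  | 0, 0 => n - 7 + 2*x
  | 0, 1 => n + 1 + 2*x - 8*y
  | 0, 2 => n + 1 - 6*x
  | 0, 3 => n + 1 + 2*x + 8*y
  | 1, 0 => n - 3 - 2*x
  | 1, 1 => n - 3 - 2*x
  | 1, 2 => n + 1 + 2*x + 8*y
  | 1, 3 => n + 1 + 2*x - 8*y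
  | 2, 0 => n - 7 + 2*x
  | 2, 1 => n - 3 - 2*x
  | 2, 2 => n - 7 + 2*x
  | 2, 3 => n - 3 - 2*x
  | 3, 0 => n - 3 - 2*x
  | 3, 1 => n + 1 + 2*x + 8*y
  | 3, 2 => n + 1 + 2*x - 8*y
  | 3, 3 => n - 3 - 2*x
  | _, _ => 0

/-- 16 times the cyclotomic numbers of order 4 in the `f` even case. -/
def evenTable16 (n x y : ℤ) (i j : ℕ) : ℤ :=
  match i, j with
  | 0, 0 => n - 11 - 6*x
  | 0, 1 => n - 3 + 2*x + 8*y
  | 0, 2 => n - 3 + 2*x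
  | 0, 3 => n - 3 + 2*x - 8*y
  | 1, 0 => n - 3 + 2*x + 8*y
  | 1, 1 => n - 3 + 2*x - 8*y
  | 1, 2 => n + 1 - 2*x
  | 1, 3 => n + 1 - 2*x
  | 2, 0 => n - 3 + 2*x
  | 2, 1 => n + 1 - 2*x
  | 2, 2 => n - 3 + 2*x
  | 2, 3 => n + 1 - 2*x
  | 3, 0 => n - 3 + 2*x - 8*y
  | 3, 1 => n + 1 - 2*x
  | 3, 2 => n + 1 - 2*x
  | 3, 3 => n - 3 + 2*x + 8*y
  | _, _ => 0


lemma neg1_zmod2_add (a b : ZMod 2) :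
    ((-1:ℤ)) ^ ((a+b).val) = (-1:ℤ)^a.val * (-1:ℤ)^b.val := by revert a b; decide

lemma sum_range_zmod {M : Type*} [AddCommMonoid M] (N : ℕ) [NeZero N] (F : ZMod N → M) :
    ∑ i ∈ Finset.range N, F ((i : ℕ) : ZMod N) = ∑ z : ZMod N, F z := by
  apply Finset.sum_nbij' (fun i => ((i : ℕ) : ZMod N)) (fun z => z.val)
  · intro a _; exact Finset.mem_univ _
  · intro z _; exact Finset.mem_range.mpr (ZMod.val_lt z)
  · intro a ha; exact ZMod.val_natCast_of_lt (Finset.mem_range.mp ha)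
  · intro z _; exact ZMod.natCast_rightInverse z
  · intro a _; rfl

lemma sum_range_double {M : Type*} [AddCommMonoid M] (n : ℕ) (g : ℕ → M) :
    ∑ i ∈ Finset.range (2*n), g i = ∑ i ∈ Finset.range n, (g (2*i) + g (2*i+1)) := by
  induction n with
  | zero => simp
  | succ m ih =>
      rw [Nat.mul_succ, Finset.sum_range_succ, Finset.sum_range_succ, Finset.sum_range_succ, ← ih]
      ring_nf
      rw [add_assoc]

section Cyc
variable {n f : ℕ} {α : ZMod n}

/-- order facts packaged -/
lemma alpha_order (hp : n.Prime) (hnf : n = 4*f+1)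
    (hα : ∀ z : ZMod n, z ≠ 0 → ∃ k : ℕ, z = α ^ k) (hf1 : 0 < f) :
    α ≠ 0 ∧ ∀ m m' : ℕ, (α ^ m = α ^ m' ↔ m % (4*f) = m' % (4*f)) := by
  haveI : Fact n.Prime := ⟨hp⟩
  have hn5 : 5 ≤ n := by
    rcases Nat.lt_or_ge n 5 with h | h
    · interval_cases n <;> omega
    · exact h
  have h2ne : (2 : ZMod n) ≠ 0 := by
    have : ((2:ℕ) : ZMod n) ≠ 0 := by
      rw [Ne, ZMod.natCast_eq_zero_iff]
      intro h; exact absurd (Nat.le_of_dvd (by norm_num) h) (by omega)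
    simpa using this
  have h2ne1 : (2 : ZMod n) ≠ 1 := by
    have : ((2:ℕ) : ZMod n) ≠ ((1:ℕ) : ZMod n) := by
      rw [Ne, ZMod.natCast_eq_natCast_iff, Nat.ModEq,
        Nat.mod_eq_of_lt (by omega), Nat.mod_eq_of_lt (by omega)]
      omega
    simpa using this
  have hα0 : α ≠ 0 := by
    intro h
    obtain ⟨k, hk⟩ := hα 2 h2ne
    rcases Nat.eq_zero_or_pos k with rfl | hk0
    · rw [pow_zero] at hk; exact h2ne1 hk
    · rw [h, zero_pow hk0.ne'] at hk; exact h2ne hk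
  refine ⟨hα0, ?_⟩
  set A : (ZMod n)ˣ := Units.mk0 α hα0 with hA
  have hcard : Fintype.card (ZMod n)ˣ = 4*f := by
    rw [ZMod.card_units_eq_totient, Nat.totient_prime hp]; omega
  have hvp : ∀ k : ℕ, ((A ^ k : (ZMod n)ˣ) : ZMod n) = α ^ k := by
    intro k
    induction k with
    | zero => simp
    | succ m ih => rw [pow_succ, pow_succ, Units.val_mul, ih, hA, Units.val_mk0]
  have hordA : orderOf A = 4*f := by
    rw [← hcard, ← Nat.card_eq_fintype_card]
    apply orderOf_eq_card_of_forall_mem_zpowers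
    intro x
    obtain ⟨k, hk⟩ := hα (x : ZMod n) (Units.ne_zero x)
    refine ⟨(k : ℤ), Units.ext ?_⟩
    show ((A ^ (k:ℤ) : (ZMod n)ˣ) : ZMod n) = (x : ZMod n)
    rw [zpow_natCast, hvp, hk]
  intro m m'
  have hiff : (α ^ m = α ^ m') ↔ (A ^ m = A ^ m') := by
    rw [Units.ext_iff, hvp, hvp]
  rw [hiff, pow_eq_pow_iff_modEq, hordA]; rfl

variable (hf1 : 0 < f)
  (hord : ∀ m m' : ℕ, (α ^ m = α ^ m' ↔ m % (4*f) = m' % (4*f)))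

include hf1 hord

lemma cyc_exists_pow_lt (m : ℕ) : ∃ t < f, α ^ m = α ^ (4*t + m % 4) := by
  refine ⟨(m % (4*f))/4, ?_, ?_⟩
  · have h1 : m % (4*f) < 4*f := Nat.mod_lt _ (by omega)
    omega
  · rw [hord]
    have h2 : (m % (4*f)) % 4 = m % 4 := Nat.mod_mod_of_dvd m ⟨f, rfl⟩
    have h3 := Nat.div_add_mod (m % (4*f)) 4
    have h4 : 4 * ((m % (4*f))/4) + m % 4 = m % (4*f) := by omega
    rw [h4]
    exact (Nat.mod_mod_of_dvd m (dvd_refl (4*f))).symm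

lemma mem_cycClass_iff (i : ℕ) (z : ZMod n) :
    z ∈ cycClass n f α i ↔ ∃ m : ℕ, z = α ^ m ∧ m % 4 = i % 4 := by
  constructor
  · rintro ⟨t, ht, rfl⟩
    exact ⟨4*t+i, rfl, by omega⟩
  · rintro ⟨m, rfl, hm⟩
    obtain ⟨t, ht, hpow⟩ := cyc_exists_pow_lt hf1 hord m
    set q := i / 4 with hq
    set j := i % 4 with hj
    set k := f * q with hk
    have hqk : q ≤ k := Nat.le_mul_of_pos_left q hf1
    refine ⟨(t + (k - q)) % f, Nat.mod_lt _ hf1, ?_⟩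
    rw [hpow, hord]
    have key : ((t + (k - q)) % f + q) % f = t % f := by
      rw [Nat.mod_add_mod]
      have he : t + (k - q) + q = t + q * f := by
        have : k = q * f := by rw [hk, mul_comm]
        omega
      rw [he, Nat.add_mul_mod_self_right]
    have h5 : ((t + (k - q)) % f + q) ≡ t [MOD f] := key
    have h6 : 4 * ((t + (k - q)) % f + q) ≡ 4 * t [MOD 4*f] := h5.mul_left' 4
    have h7 := h6.add_right j
    have harg : 4*((t + (k - q))%f + q) + j = 4*((t + (k - q))%f) + i := by omega
    rw [harg] at h7
    rw [hm]
    exact h7.symm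

lemma cycClass_mod (i : ℕ) : cycClass n f α i = cycClass n f α (i % 4) := by
  ext z
  rw [mem_cycClass_iff hf1 hord, mem_cycClass_iff hf1 hord, Nat.mod_mod_of_dvd i (dvd_refl 4)]

omit hf1 hord in
lemma mem_ne_zero (hnz : ∀ m : ℕ, α ^ m ≠ 0) {i : ℕ} {z : ZMod n}
    (h : z ∈ cycClass n f α i) : z ≠ 0 := by
  obtain ⟨t, _, rfl⟩ := h
  exact hnz _

omit hf1 in
lemma classes_disjoint {i j : ℕ} (hij : i % 4 ≠ j % 4) :
    Disjoint (cycClass n f α i) (cycClass n f α j) := by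
  rw [Set.disjoint_left]
  rintro z ⟨t, _, rfl⟩ ⟨s, _, hz⟩
  rw [hord] at hz
  have h1 : (4*t+i) % (4*f) % 4 = (4*t+i) % 4 := Nat.mod_mod_of_dvd _ ⟨f, rfl⟩
  have h2 : (4*s+j) % (4*f) % 4 = (4*s+j) % 4 := Nat.mod_mod_of_dvd _ ⟨f, rfl⟩
  omega

lemma exists_mem {z : ZMod n} (hz : z ≠ 0) (hα : ∀ w : ZMod n, w ≠ 0 → ∃ k : ℕ, w = α ^ k) :
    ∃ k < 4, z ∈ cycClass n f α k := by
  obtain ⟨m, hm⟩ := hα z hz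
  exact ⟨m % 4, Nat.mod_lt _ (by omega), (mem_cycClass_iff hf1 hord _ _).mpr
    ⟨m, hm, by omega⟩⟩

lemma mul_mem_cyc {i j : ℕ} {z w : ZMod n} (hz : z ∈ cycClass n f α i)
    (hw : w ∈ cycClass n f α j) : z * w ∈ cycClass n f α (i + j) := by
  rw [mem_cycClass_iff hf1 hord] at hz hw ⊢
  obtain ⟨m, rfl, hm⟩ := hz
  obtain ⟨m', rfl, hm'⟩ := hw
  exact ⟨m + m', (pow_add α m m').symm, by omega⟩

lemma mul_mem_iff (hα : ∀ v : ZMod n, v ≠ 0 → ∃ k : ℕ, v = α ^ k) {k : ℕ} {σ : ZMod n}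
    (hσ : σ ∈ cycClass n f α k) (hk : k < 4) {j : ℕ} (hj : j < 4) {w : ZMod n} (hw : w ≠ 0) :
    σ * w ∈ cycClass n f α j ↔ w ∈ cycClass n f α ((j + 4 - k) % 4) := by
  constructor
  · intro h
    obtain ⟨l, hl, hmem⟩ := exists_mem hf1 hord hw hα
    have h2 := mul_mem_cyc hf1 hord hσ hmem
    by_cases hc : (k + l) % 4 = j % 4
    · have : l = (j + 4 - k) % 4 := by omega
      rwa [← this]
    · exfalso
      rw [cycClass_mod hf1 hord] at h h2
      exact (Set.disjoint_left.mp (classes_disjoint hord (by omega)) h2) h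
  · intro h
    have h2 := mul_mem_cyc hf1 hord hσ h
    rwa [cycClass_mod hf1 hord, show (k + (j + 4 - k) % 4) % 4 = j by omega] at h2

omit hf1 in
lemma cycClass_ncard (i : ℕ) : (cycClass n f α i).ncard = f := by
  have hset : cycClass n f α i
      = (((Finset.range f).image fun t => α ^ (4*t+i) : Finset (ZMod n)) : Set (ZMod n)) := by
    ext z
    simp only [cycClass, Set.mem_setOf_eq, Finset.coe_image, Set.mem_image, Finset.mem_coe,
      Finset.mem_range]
    constructor
    · rintro ⟨t, ht, rfl⟩; exact ⟨t, ht, rfl⟩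
    · rintro ⟨t, ht, rfl⟩; exact ⟨t, ht, rfl⟩
  rw [hset, Set.ncard_coe_finset, Finset.card_image_of_injOn, Finset.card_range]
  intro t ht s hs h
  simp only [Finset.coe_range, Set.mem_Iio] at ht hs
  rw [hord] at h
  have h2 : 4*t + i ≡ 4*s + i [MOD 4*f] := h
  have h3 := (Nat.ModEq.mul_left_cancel_iff' (by norm_num : (4:ℕ) ≠ 0)).mp
    (h2.add_right_cancel' i)
  have h4 : t % f = s % f := h3
  rw [Nat.mod_eq_of_lt ht, Nat.mod_eq_of_lt hs] at h4
  exact h4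

lemma count_shift (hp : n.Prime) (hα : ∀ v : ZMod n, v ≠ 0 → ∃ k : ℕ, v = α ^ k)
    (hnz : ∀ m : ℕ, α ^ m ≠ 0)
    {k : ℕ} {σ : ZMod n} (hσ : σ ∈ cycClass n f α k) (hk : k < 4)
    {i j : ℕ} (hi : i < 4) (hj : j < 4) :
    {x : ZMod n | x ∈ cycClass n f α i ∧ x + σ ∈ cycClass n f α j}.ncard
      = cycNum n f α ((i + 4 - k) % 4) ((j + 4 - k) % 4) := by
  haveI : Fact n.Prime := ⟨hp⟩
  have hσ0 : σ ≠ 0 := mem_ne_zero hnz hσ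
  have hset : {x : ZMod n | x ∈ cycClass n f α i ∧ x + σ ∈ cycClass n f α j}
      = (fun z => σ * z - σ) ''
        {z : ZMod n | z - 1 ∈ cycClass n f α ((i + 4 - k) % 4) ∧ z ∈ cycClass n f α ((j + 4 - k) % 4)} := by
    ext x
    simp only [Set.mem_setOf_eq, Set.mem_image]
    constructor
    · rintro ⟨h1, h2⟩
      have hx0 : x ≠ 0 := mem_ne_zero hnz h1
      have hxσ0 : x + σ ≠ 0 := mem_ne_zero hnz h2
      refine ⟨σ⁻¹ * (x + σ), ⟨?_, ?_⟩, ?_⟩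
      · have he : σ * (σ⁻¹ * (x + σ) - 1) = x := by
          field_simp
          ring
        have hz0 : σ⁻¹ * (x + σ) - 1 ≠ 0 := by
          intro hc; rw [hc, mul_zero] at he; exact hx0 he.symm
        rw [← mul_mem_iff hf1 hord hα hσ hk hi hz0, he]
        exact h1
      · have he : σ * (σ⁻¹ * (x + σ)) = x + σ := by
          field_simp
        have hz0 : σ⁻¹ * (x + σ) ≠ 0 := by
          intro hc; rw [hc, mul_zero] at he; exact hxσ0 he.symm
        rw [← mul_mem_iff hf1 hord hα hσ hk hj hz0, he]
        exact h2
      · field_simp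
        ring
    · rintro ⟨z, ⟨hz1, hz2⟩, rfl⟩
      constructor
      · have he : σ * z - σ = σ * (z - 1) := by ring
        rw [he]
        have h2 := mul_mem_cyc hf1 hord hσ hz1
        rwa [cycClass_mod hf1 hord, show (k + (i + 4 - k) % 4) % 4 = i % 4 by omega,
          ← cycClass_mod hf1 hord] at h2
      · have he : σ * z - σ + σ = σ * z := by ring
        rw [he]
        have h2 := mul_mem_cyc hf1 hord hσ hz2
        rwa [cycClass_mod hf1 hord, show (k + (j + 4 - k) % 4) % 4 = j % 4 by omega,
          ← cycClass_mod hf1 hord] at h2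
  rw [hset, Set.ncard_image_of_injective _ ?_]
  · rfl
  · intro a b hab
    simp only [sub_left_inj] at hab
    exact mul_left_cancel₀ hσ0 hab

omit hf1 in
lemma count_zero {i j : ℕ} (hi : i < 4) (hj : j < 4) :
    {x : ZMod n | x ∈ cycClass n f α i ∧ x + 0 ∈ cycClass n f α j}.ncard
      = if i = j then f else 0 := by
  by_cases hij : i = j
  · subst hij
    have h0 : {x : ZMod n | x ∈ cycClass n f α i ∧ x + 0 ∈ cycClass n f α i}
        = cycClass n f α i := by
      ext x; simp
    rw [if_pos rfl, h0, cycClass_ncard hord]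
  · rw [if_neg hij]
    have : {x : ZMod n | x ∈ cycClass n f α i ∧ x + 0 ∈ cycClass n f α j} = ∅ := by
      ext x
      simp only [add_zero, Set.mem_setOf_eq, Set.mem_empty_iff_false, iff_false, not_and]
      intro h1 h2
      exact (Set.disjoint_left.mp (classes_disjoint hord (by omega)) h1) h2
    rw [this, Set.ncard_empty]

end Cyc


section Bin
variable {n : ℕ}

lemma binCorr_univ (N : ℕ) [NeZero N] (s t : ZMod N → ZMod 2) (τ : ZMod N) :
    binCorr N s t τ = ∑ z : ZMod N, (-1:ℤ)^((s z + t (z + τ)).val) :=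
  sum_range_zmod N (fun z => (-1:ℤ)^((s z + t (z + τ)).val))

lemma binCorr_shift_right (N : ℕ) (s t : ZMod N → ZMod 2) (g τ : ZMod N) :
    binCorr N s (fun i => t (i + g)) τ = binCorr N s t (τ + g) := by
  unfold binCorr
  exact Finset.sum_congr rfl fun i _ => by simp only [add_assoc]

lemma binCorr_shift_left (N : ℕ) [NeZero N] (s t : ZMod N → ZMod 2) (g τ : ZMod N) :
    binCorr N (fun i => s (i + g)) t τ = binCorr N s t (τ - g) := by
  rw [binCorr_univ, binCorr_univ]
  apply Fintype.sum_equiv (Equiv.addRight g)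
  intro z
  simp only [Equiv.coe_addRight]
  congr 2
  ring

lemma binCorr_const_left (N : ℕ) (e : ZMod 2) (s t : ZMod N → ZMod 2) (τ : ZMod N) :
    binCorr N (fun i => e + s i) t τ = (-1:ℤ)^e.val * binCorr N s t τ := by
  unfold binCorr
  rw [Finset.mul_sum]
  refine Finset.sum_congr rfl fun i _ => ?_
  rw [add_assoc, neg1_zmod2_add]

lemma binCorr_const_right (N : ℕ) (e : ZMod 2) (s t : ZMod N → ZMod 2) (τ : ZMod N) :
    binCorr N s (fun i => e + t i) τ = (-1:ℤ)^e.val * binCorr N s t τ := by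
  unfold binCorr
  rw [Finset.mul_sum]
  refine Finset.sum_congr rfl fun i _ => ?_
  rw [add_left_comm, neg1_zmod2_add]

lemma ncard_filter {β : Type*} [Fintype β] (P : β → Prop) [DecidablePred P] :
    {x | P x}.ncard = (Finset.univ.filter P).card := by
  rw [← Set.toFinset_setOf]
  exact Set.ncard_eq_toFinset_card' _

lemma sum_indicator {N : ℕ} [NeZero N] (P : ZMod N → Prop) [DecidablePred P] :
    (∑ z : ZMod N, if P z then (1:ℤ) else 0) = {z | P z}.ncard := by
  rw [Finset.sum_boole, ncard_filter P]

end Bin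

lemma mul_indicator_ite (P Q : Prop) [Decidable P] [Decidable Q] :
    (if P then (1:ℤ) else 0) * (if Q then (1:ℤ) else 0) = if P ∧ Q then (1:ℤ) else 0 := by
  by_cases hP : P <;> by_cases hQ : Q <;> simp [hP, hQ]

section Master
variable {n f : ℕ} {α : ZMod n}

lemma binCorr_cycSeq (hnf : n = 4*f+1) (hf1 : 0 < f)
    (hord : ∀ m m' : ℕ, (α ^ m = α ^ m' ↔ m % (4*f) = m' % (4*f)))
    {i1 j1 i2 j2 : ℕ} (hi1 : i1 < 4) (hj1 : j1 < 4) (hi2 : i2 < 4) (hj2 : j2 < 4)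
    (hd1 : i1 ≠ j1) (hd2 : i2 ≠ j2) (σ : ZMod n) :
    binCorr n (cycSeq n f α i1 j1) (cycSeq n f α i2 j2) σ
      = 2 - n + 4 * (({x : ZMod n | x ∈ cycClass n f α i1 ∧ x + σ ∈ cycClass n f α i2}.ncard : ℤ)
        + ({x : ZMod n | x ∈ cycClass n f α i1 ∧ x + σ ∈ cycClass n f α j2}.ncard : ℤ)
        + ({x : ZMod n | x ∈ cycClass n f α j1 ∧ x + σ ∈ cycClass n f α i2}.ncard : ℤ)
        + ({x : ZMod n | x ∈ cycClass n f α j1 ∧ x + σ ∈ cycClass n f α j2}.ncard : ℤ)) := by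
  classical
  haveI : NeZero n := ⟨by omega⟩
  set A := cycClass n f α i1 with hA
  set B := cycClass n f α j1 with hB
  set C := cycClass n f α i2 with hC
  set D' := cycClass n f α j2 with hD'
  have hdisj1 : Disjoint A B := classes_disjoint hord (by omega)
  have hdisj2 : Disjoint C D' := classes_disjoint hord (by omega)
  rw [binCorr_univ]
  have hpt : ∀ z : ZMod n,
      (-1:ℤ)^((cycSeq n f α i1 j1 z + cycSeq n f α i2 j2 (z+σ)).val)
      = 1 - 2*(if z ∈ A ∪ B then (1:ℤ) else 0)
          - 2*(if z + σ ∈ C ∪ D' then (1:ℤ) else 0)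
          + 4*((if z ∈ A ∪ B then (1:ℤ) else 0)*(if z + σ ∈ C ∪ D' then (1:ℤ) else 0)) := by
    intro z
    rw [neg1_zmod2_add]
    have h : ∀ (a b : ℕ) (w : ZMod n), (-1:ℤ)^((cycSeq n f α a b w).val)
        = 1 - 2*(if w ∈ cycClass n f α a ∪ cycClass n f α b then (1:ℤ) else 0) := by
      intro a b w
      unfold cycSeq
      by_cases hw : w ∈ cycClass n f α a ∪ cycClass n f α b
      · simp only [if_pos hw]; decide
      · simp only [if_neg hw]; decide
    rw [h, h]
    ring
  rw [Finset.sum_congr rfl (fun z _ => hpt z)]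
  have e1 : (∑ _z : ZMod n, (1:ℤ)) = n := by
    rw [Finset.sum_const, Finset.card_univ, ZMod.card n]
    simp
  have e2 : (∑ z : ZMod n, (if z ∈ A ∪ B then (1:ℤ) else 0)) = 2 * f := by
    rw [sum_indicator (· ∈ A ∪ B), Set.setOf_mem_eq,
      Set.ncard_union_eq hdisj1 (Set.toFinite A) (Set.toFinite B),
      hA, hB, cycClass_ncard hord, cycClass_ncard hord]
    push_cast; ring
  have e3 : (∑ z : ZMod n, (if z + σ ∈ C ∪ D' then (1:ℤ) else 0)) = 2 * f := by
    have := Fintype.sum_equiv (Equiv.addRight σ)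
      (fun z : ZMod n => (if z + σ ∈ C ∪ D' then (1:ℤ) else 0))
      (fun z : ZMod n => (if z ∈ C ∪ D' then (1:ℤ) else 0)) (fun z => rfl)
    rw [this, sum_indicator (· ∈ C ∪ D'), Set.setOf_mem_eq,
      Set.ncard_union_eq hdisj2 (Set.toFinite C) (Set.toFinite D'),
      hC, hD', cycClass_ncard hord, cycClass_ncard hord]
    push_cast; ring
  have e4 : (∑ z : ZMod n, (if z ∈ A ∪ B then (1:ℤ) else 0)*(if z + σ ∈ C ∪ D' then (1:ℤ) else 0))
      = ({x : ZMod n | x ∈ A ∧ x + σ ∈ C}.ncard : ℤ)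
        + ({x : ZMod n | x ∈ A ∧ x + σ ∈ D'}.ncard : ℤ)
        + ({x : ZMod n | x ∈ B ∧ x + σ ∈ C}.ncard : ℤ)
        + ({x : ZMod n | x ∈ B ∧ x + σ ∈ D'}.ncard : ℤ) := by
    have hsplit : ∀ z : ZMod n,
        (if z ∈ A ∪ B then (1:ℤ) else 0)*(if z + σ ∈ C ∪ D' then (1:ℤ) else 0)
        = (if z ∈ A ∧ z + σ ∈ C then (1:ℤ) else 0) + (if z ∈ A ∧ z + σ ∈ D' then (1:ℤ) else 0)
          + (if z ∈ B ∧ z + σ ∈ C then (1:ℤ) else 0) + (if z ∈ B ∧ z + σ ∈ D' then (1:ℤ) else 0) := by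
      intro z
      have hzAB : ¬ (z ∈ A ∧ z ∈ B) := fun ⟨h1, h2⟩ => (Set.disjoint_left.mp hdisj1 h1) h2
      have hzCD : ¬ (z + σ ∈ C ∧ z + σ ∈ D') := fun ⟨h1, h2⟩ => (Set.disjoint_left.mp hdisj2 h1) h2
      by_cases h1 : z ∈ A <;> by_cases h2 : z ∈ B <;>
        by_cases h3 : z + σ ∈ C <;> by_cases h4 : z + σ ∈ D' <;>
        simp [h1, h2, h3, h4, Set.mem_union] <;> tauto
    rw [Finset.sum_congr rfl (fun z _ => hsplit z)]
    rw [Finset.sum_add_distrib, Finset.sum_add_distrib, Finset.sum_add_distrib]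
    rw [sum_indicator (fun z => z ∈ A ∧ z + σ ∈ C), sum_indicator (fun z => z ∈ A ∧ z + σ ∈ D'),
      sum_indicator (fun z => z ∈ B ∧ z + σ ∈ C), sum_indicator (fun z => z ∈ B ∧ z + σ ∈ D')]
  have expand : (∑ z : ZMod n, (1 - 2*(if z ∈ A ∪ B then (1:ℤ) else 0)
          - 2*(if z + σ ∈ C ∪ D' then (1:ℤ) else 0)
          + 4*((if z ∈ A ∪ B then (1:ℤ) else 0)*(if z + σ ∈ C ∪ D' then (1:ℤ) else 0))))
      = (∑ _z : ZMod n, (1:ℤ)) - 2*(∑ z : ZMod n, (if z ∈ A ∪ B then (1:ℤ) else 0))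
        - 2*(∑ z : ZMod n, (if z + σ ∈ C ∪ D' then (1:ℤ) else 0))
        + 4*(∑ z : ZMod n, (if z ∈ A ∪ B then (1:ℤ) else 0)*(if z + σ ∈ C ∪ D' then (1:ℤ) else 0)) := by
    rw [Finset.sum_add_distrib, Finset.sum_sub_distrib, Finset.sum_sub_distrib,
      ← Finset.mul_sum, ← Finset.mul_sum, ← Finset.mul_sum]
  rw [expand, e1, e2, e3, e4]
  have hn4 : (n:ℤ) = 4*f+1 := by exact_mod_cast congrArg (Nat.cast : ℕ → ℤ) hnf
  linarith

end Master

section Inter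
variable {n : ℕ}

lemma interleave_apply_even (hn : 0 < n) (p q : ZMod n → ZMod 2) (m : ℕ) :
    interleaveSeq n p q ((2*m : ℕ) : ZMod (2*n)) = p ((m : ℕ) : ZMod n) := by
  unfold interleaveSeq
  have hval : ((2*m : ℕ) : ZMod (2*n)).val = 2*(m % n) := by
    rw [ZMod.val_natCast]
    exact Nat.mul_mod_mul_left 2 m n
  rw [hval]
  have h2 : 2*(m % n) % 2 = 0 := Nat.mul_mod_right 2 _
  have h3 : 2*(m % n) / 2 = m % n := by omega
  rw [if_pos h2, h3, ZMod.natCast_mod]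

lemma interleave_apply_odd (hn : 0 < n) (p q : ZMod n → ZMod 2) (m : ℕ) :
    interleaveSeq n p q ((2*m+1 : ℕ) : ZMod (2*n)) = q ((m : ℕ) : ZMod n) := by
  unfold interleaveSeq
  have hval : ((2*m+1 : ℕ) : ZMod (2*n)).val = 2*(m % n)+1 := by
    rw [ZMod.val_natCast]
    have hd := Nat.div_add_mod m n
    have hmn : m % n < n := Nat.mod_lt _ hn
    have harr : 2*m+1 = (2*(m % n)+1) + (2*n)*(m / n) := by
      have h2 : (2*n)*(m / n) = 2*(n*(m / n)) := by ring
      omega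
    rw [harr, Nat.add_mul_mod_self_left, Nat.mod_eq_of_lt (by omega : 2*(m % n)+1 < 2*n)]
  rw [hval]
  have h2 : ¬ ((2*(m % n)+1) % 2 = 0) := by omega
  have h3 : (2*(m % n)+1) / 2 = m % n := by omega
  rw [if_neg h2, h3, ZMod.natCast_mod]

lemma interleave_binCorr_even (hn : 0 < n) (p q r w : ZMod n → ZMod 2) (σ : ℕ) :
    binCorr (2*n) (interleaveSeq n p q) (interleaveSeq n r w) ((2*σ : ℕ) : ZMod (2*n))
      = binCorr n p r ((σ:ℕ) : ZMod n) + binCorr n q w ((σ:ℕ) : ZMod n) := by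
  unfold binCorr
  rw [sum_range_double, ← Finset.sum_add_distrib]
  refine Finset.sum_congr rfl fun i _ => ?_
  have hc1 : ((2*i : ℕ) : ZMod (2*n)) + ((2*σ : ℕ) : ZMod (2*n)) = ((2*(i+σ) : ℕ) : ZMod (2*n)) := by
    rw [← Nat.cast_add]; congr 1; omega
  have hc2 : ((2*i+1 : ℕ) : ZMod (2*n)) + ((2*σ : ℕ) : ZMod (2*n)) = ((2*(i+σ)+1 : ℕ) : ZMod (2*n)) := by
    rw [← Nat.cast_add]; congr 1; omega
  have hc3 : ((i+σ : ℕ) : ZMod n) = ((i:ℕ) : ZMod n) + ((σ:ℕ) : ZMod n) := by push_cast; ring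
  congr 1
  · rw [hc1, interleave_apply_even hn p q, interleave_apply_even hn r w, hc3]
  · rw [hc2, interleave_apply_odd hn p q, interleave_apply_odd hn r w, hc3]

lemma interleave_binCorr_odd (hn : 0 < n) (p q r w : ZMod n → ZMod 2) (σ : ℕ) :
    binCorr (2*n) (interleaveSeq n p q) (interleaveSeq n r w) ((2*σ+1 : ℕ) : ZMod (2*n))
      = binCorr n p w ((σ:ℕ) : ZMod n) + binCorr n q r ((σ+1 : ℕ) : ZMod n) := by
  unfold binCorr
  rw [sum_range_double, ← Finset.sum_add_distrib]
  refine Finset.sum_congr rfl fun i _ => ?_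
  have hc1 : ((2*i : ℕ) : ZMod (2*n)) + ((2*σ+1 : ℕ) : ZMod (2*n)) = ((2*(i+σ)+1 : ℕ) : ZMod (2*n)) := by
    rw [← Nat.cast_add]; congr 1; omega
  have hc2 : ((2*i+1 : ℕ) : ZMod (2*n)) + ((2*σ+1 : ℕ) : ZMod (2*n)) = ((2*(i+σ+1) : ℕ) : ZMod (2*n)) := by
    rw [← Nat.cast_add]; congr 1; omega
  have hc3 : ((i+σ : ℕ) : ZMod n) = ((i:ℕ) : ZMod n) + ((σ:ℕ) : ZMod n) := by push_cast; ring
  have hc4 : ((i+(σ+1) : ℕ) : ZMod n) = ((i:ℕ) : ZMod n) + ((σ+1:ℕ) : ZMod n) := by push_cast; ring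
  congr 1
  · rw [hc1, interleave_apply_even hn p q, interleave_apply_odd hn r w, hc3]
  · rw [hc2, interleave_apply_odd hn p q, interleave_apply_even hn r w,
      show i+σ+1 = i+(σ+1) by omega, hc4]

end Inter

lemma gray_pointwise (a b a' b' : ZMod 2) :
    2 * (Complex.I) ^ ((grayInv a b - grayInv a' b').val)
      = (-1:ℂ)^((a+a').val) + (-1:ℂ)^((b+b').val)
        + Complex.I * ((-1:ℂ)^((a+b').val) - (-1:ℂ)^((b+a').val)) := by
  have hI2 : (Complex.I)^2 = -1 := Complex.I_sq
  have hI3 : (Complex.I)^3 = -Complex.I := by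
    rw [pow_succ, hI2]; ring
  have v1 : ((1:ZMod 2)).val = 1 := rfl
  have v2 : ((2:ZMod 2)).val = 0 := rfl
  have w1 : ((1:ZMod 4)).val = 1 := rfl
  have w2 : ((2:ZMod 4)).val = 2 := rfl
  have w3 : ((3:ZMod 4)).val = 3 := rfl
  have w4 : ((-3:ZMod 4)).val = 1 := rfl
  have w5 : ((-2:ZMod 4)).val = 2 := rfl
  have w6 : ((-1:ZMod 4)).val = 3 := rfl
  have hz2 : ∀ z : ZMod 2, z = 0 ∨ z = 1 := by decide
  rcases hz2 a with rfl | rfl <;> rcases hz2 b with rfl | rfl <;> rcases hz2 a' with rfl | rfl <;> rcases hz2 b' with rfl | rfl <;>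
    norm_num [grayInv, v1, v2, w1, w2, w3, w4, w5, w6, hI2, hI3] <;>
    ring_nf <;> norm_num [hI2, hI3]

lemma gray_corr (N : ℕ) (c d : ZMod N → ZMod 2) (τ : ZMod N) :
    2 * quadCorr N (fun i => grayInv (c i) (d i)) (fun i => grayInv (c i) (d i)) τ
      = ((binCorr N c c τ + binCorr N d d τ : ℤ) : ℂ)
        + Complex.I * ((binCorr N c d τ - binCorr N d c τ : ℤ) : ℂ) := by
  unfold quadCorr binCorr
  push_cast
  rw [Finset.mul_sum, ← Finset.sum_add_distrib, ← Finset.sum_sub_distrib,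
    Finset.mul_sum, ← Finset.sum_add_distrib]
  exact Finset.sum_congr rfl fun i _ => gray_pointwise (c i) (d i) (c (i + τ)) (d (i + τ))


lemma binCorr_val_shift {n f : ℕ} {α : ZMod n} (hp : n.Prime) (hnf : n = 4*f+1) (hf1 : 0 < f)
    (hα : ∀ v : ZMod n, v ≠ 0 → ∃ k : ℕ, v = α ^ k)
    (hord : ∀ m m' : ℕ, (α ^ m = α ^ m' ↔ m % (4*f) = m' % (4*f)))
    (hnz : ∀ m : ℕ, α ^ m ≠ 0)
    (k : ℕ) (hk : k < 4) (σ : ZMod n) (hσ : σ ∈ cycClass n f α k)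
    (i1 j1 i2 j2 : ℕ) (hi1 : i1 < 4) (hj1 : j1 < 4) (hi2 : i2 < 4) (hj2 : j2 < 4)
    (hd1 : i1 ≠ j1) (hd2 : i2 ≠ j2) :
    binCorr n (cycSeq n f α i1 j1) (cycSeq n f α i2 j2) σ
      = 2 - n + 4*(((cycNum n f α ((i1+4-k)%4) ((i2+4-k)%4) : ℕ) : ℤ)
        + ((cycNum n f α ((i1+4-k)%4) ((j2+4-k)%4) : ℕ) : ℤ)
        + ((cycNum n f α ((j1+4-k)%4) ((i2+4-k)%4) : ℕ) : ℤ)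
        + ((cycNum n f α ((j1+4-k)%4) ((j2+4-k)%4) : ℕ) : ℤ)) := by
  rw [binCorr_cycSeq hnf hf1 hord hi1 hj1 hi2 hj2 hd1 hd2,
    count_shift (hf1 := hf1) (hord := hord) (hp := hp) (hα := hα) (hnz := hnz) (hσ := hσ)
      (hk := hk) (hi := hi1) (hj := hi2),
    count_shift (hf1 := hf1) (hord := hord) (hp := hp) (hα := hα) (hnz := hnz) (hσ := hσ)
      (hk := hk) (hi := hi1) (hj := hj2),
    count_shift (hf1 := hf1) (hord := hord) (hp := hp) (hα := hα) (hnz := hnz) (hσ := hσ)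
      (hk := hk) (hi := hj1) (hj := hi2),
    count_shift (hf1 := hf1) (hord := hord) (hp := hp) (hα := hα) (hnz := hnz) (hσ := hσ)
      (hk := hk) (hi := hj1) (hj := hj2)]

lemma binCorr_val_zero {n f : ℕ} {α : ZMod n} (hnf : n = 4*f+1) (hf1 : 0 < f)
    (hord : ∀ m m' : ℕ, (α ^ m = α ^ m' ↔ m % (4*f) = m' % (4*f)))
    (i1 j1 i2 j2 : ℕ) (hi1 : i1 < 4) (hj1 : j1 < 4) (hi2 : i2 < 4) (hj2 : j2 < 4)
    (hd1 : i1 ≠ j1) (hd2 : i2 ≠ j2) :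
    binCorr n (cycSeq n f α i1 j1) (cycSeq n f α i2 j2) 0
      = 2 - n + 4*(((if i1 = i2 then f else 0 : ℕ) : ℤ) + ((if i1 = j2 then f else 0 : ℕ) : ℤ)
        + ((if j1 = i2 then f else 0 : ℕ) : ℤ) + ((if j1 = j2 then f else 0 : ℕ) : ℤ)) := by
  rw [binCorr_cycSeq hnf hf1 hord hi1 hj1 hi2 hj2 hd1 hd2,
    count_zero (hord := hord) (hi := hi1) (hj := hi2),
    count_zero (hord := hord) (hi := hi1) (hj := hj2),
    count_zero (hord := hord) (hi := hj1) (hj := hi2),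
    count_zero (hord := hord) (hi := hj1) (hj := hj2)]


lemma evenP1 {n f : ℕ} {α : ZMod n} (hp : n.Prime) (hnf : n = 4*f+1) (hf1 : 0 < f)
    (hα : ∀ v : ZMod n, v ≠ 0 → ∃ k : ℕ, v = α ^ k)
    (hord : ∀ m m' : ℕ, (α ^ m = α ^ m' ↔ m % (4*f) = m' % (4*f)))
    (hnz : ∀ m : ℕ, α ^ m ≠ 0) (x : ℤ)
    (hTab : ∀ i < 4, ∀ j < 4, 16 * (cycNum n f α i j : ℤ) = oddTable16 (n : ℤ) x (-1) i j)
    (σ : ZMod n) (hσ0 : σ ≠ 0) :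
    binCorr n (cycSeq n f α 0 1) (cycSeq n f α 0 1) σ
      + binCorr n (cycSeq n f α 0 2) (cycSeq n f α 0 2) σ = -2 := by
  have hn4 : (n:ℤ) = 4*(f:ℤ)+1 := by exact_mod_cast hnf
  have t00 : 16 * ((cycNum n f α 0 0 : ℕ) : ℤ) = (n:ℤ) - 7 + 2*x := hTab 0 (by norm_num) 0 (by norm_num)
  have t01 : 16 * ((cycNum n f α 0 1 : ℕ) : ℤ) = (n:ℤ) + 1 + 2*x - 8*(-1) := hTab 0 (by norm_num) 1 (by norm_num)
  have t02 : 16 * ((cycNum n f α 0 2 : ℕ) : ℤ) = (n:ℤ) + 1 - 6*x := hTab 0 (by norm_num) 2 (by norm_num)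
  have t03 : 16 * ((cycNum n f α 0 3 : ℕ) : ℤ) = (n:ℤ) + 1 + 2*x + 8*(-1) := hTab 0 (by norm_num) 3 (by norm_num)
  have t10 : 16 * ((cycNum n f α 1 0 : ℕ) : ℤ) = (n:ℤ) - 3 - 2*x := hTab 1 (by norm_num) 0 (by norm_num)
  have t11 : 16 * ((cycNum n f α 1 1 : ℕ) : ℤ) = (n:ℤ) - 3 - 2*x := hTab 1 (by norm_num) 1 (by norm_num)
  have t12 : 16 * ((cycNum n f α 1 2 : ℕ) : ℤ) = (n:ℤ) + 1 + 2*x + 8*(-1) := hTab 1 (by norm_num) 2 (by norm_num)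
  have t13 : 16 * ((cycNum n f α 1 3 : ℕ) : ℤ) = (n:ℤ) + 1 + 2*x - 8*(-1) := hTab 1 (by norm_num) 3 (by norm_num)
  have t20 : 16 * ((cycNum n f α 2 0 : ℕ) : ℤ) = (n:ℤ) - 7 + 2*x := hTab 2 (by norm_num) 0 (by norm_num)
  have t21 : 16 * ((cycNum n f α 2 1 : ℕ) : ℤ) = (n:ℤ) - 3 - 2*x := hTab 2 (by norm_num) 1 (by norm_num)
  have t22 : 16 * ((cycNum n f α 2 2 : ℕ) : ℤ) = (n:ℤ) - 7 + 2*x := hTab 2 (by norm_num) 2 (by norm_num)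
  have t23 : 16 * ((cycNum n f α 2 3 : ℕ) : ℤ) = (n:ℤ) - 3 - 2*x := hTab 2 (by norm_num) 3 (by norm_num)
  have t30 : 16 * ((cycNum n f α 3 0 : ℕ) : ℤ) = (n:ℤ) - 3 - 2*x := hTab 3 (by norm_num) 0 (by norm_num)
  have t31 : 16 * ((cycNum n f α 3 1 : ℕ) : ℤ) = (n:ℤ) + 1 + 2*x + 8*(-1) := hTab 3 (by norm_num) 1 (by norm_num)
  have t32 : 16 * ((cycNum n f α 3 2 : ℕ) : ℤ) = (n:ℤ) + 1 + 2*x - 8*(-1) := hTab 3 (by norm_num) 2 (by norm_num)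
  have t33 : 16 * ((cycNum n f α 3 3 : ℕ) : ℤ) = (n:ℤ) - 3 - 2*x := hTab 3 (by norm_num) 3 (by norm_num)
  obtain ⟨k, hk, hσk⟩ := exists_mem hf1 hord hσ0 hα
  interval_cases k
  · rw [binCorr_val_shift hp hnf hf1 hα hord hnz 0 (by norm_num) σ hσk 0 1 0 1 (by norm_num) (by norm_num) (by norm_num) (by norm_num) (by norm_num) (by norm_num),
        binCorr_val_shift hp hnf hf1 hα hord hnz 0 (by norm_num) σ hσk 0 2 0 2 (by norm_num) (by norm_num) (by norm_num) (by norm_num) (by norm_num) (by norm_num)]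
    norm_num
    linarith [t00, t01, t02, t03, t10, t11, t12, t13, t20, t21, t22, t23, t30, t31, t32, t33]
  · rw [binCorr_val_shift hp hnf hf1 hα hord hnz 1 (by norm_num) σ hσk 0 1 0 1 (by norm_num) (by norm_num) (by norm_num) (by norm_num) (by norm_num) (by norm_num),
        binCorr_val_shift hp hnf hf1 hα hord hnz 1 (by norm_num) σ hσk 0 2 0 2 (by norm_num) (by norm_num) (by norm_num) (by norm_num) (by norm_num) (by norm_num)]
    norm_num
    linarith [t00, t01, t02, t03, t10, t11, t12, t13, t20, t21, t22, t23, t30, t31, t32, t33]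
  · rw [binCorr_val_shift hp hnf hf1 hα hord hnz 2 (by norm_num) σ hσk 0 1 0 1 (by norm_num) (by norm_num) (by norm_num) (by norm_num) (by norm_num) (by norm_num),
        binCorr_val_shift hp hnf hf1 hα hord hnz 2 (by norm_num) σ hσk 0 2 0 2 (by norm_num) (by norm_num) (by norm_num) (by norm_num) (by norm_num) (by norm_num)]
    norm_num
    linarith [t00, t01, t02, t03, t10, t11, t12, t13, t20, t21, t22, t23, t30, t31, t32, t33]
  · rw [binCorr_val_shift hp hnf hf1 hα hord hnz 3 (by norm_num) σ hσk 0 1 0 1 (by norm_num) (by norm_num) (by norm_num) (by norm_num) (by norm_num) (by norm_num),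
        binCorr_val_shift hp hnf hf1 hα hord hnz 3 (by norm_num) σ hσk 0 2 0 2 (by norm_num) (by norm_num) (by norm_num) (by norm_num) (by norm_num) (by norm_num)]
    norm_num
    linarith [t00, t01, t02, t03, t10, t11, t12, t13, t20, t21, t22, t23, t30, t31, t32, t33]

lemma oddP1 {n f : ℕ} {α : ZMod n} (hp : n.Prime) (hnf : n = 4*f+1) (hf1 : 0 < f)
    (hα : ∀ v : ZMod n, v ≠ 0 → ∃ k : ℕ, v = α ^ k)
    (hord : ∀ m m' : ℕ, (α ^ m = α ^ m' ↔ m % (4*f) = m' % (4*f)))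
    (hnz : ∀ m : ℕ, α ^ m ≠ 0) (x : ℤ)
    (hTab : ∀ i < 4, ∀ j < 4, 16 * (cycNum n f α i j : ℤ) = oddTable16 (n : ℤ) x (-1) i j)
    (δ : ZMod n) :
    binCorr n (cycSeq n f α 0 1) (cycSeq n f α 0 2) δ
        + binCorr n (cycSeq n f α 0 2) (cycSeq n f α 0 1) δ = 2
      ∨ binCorr n (cycSeq n f α 0 1) (cycSeq n f α 0 2) δ
        + binCorr n (cycSeq n f α 0 2) (cycSeq n f α 0 1) δ = -2 := by
  have hn4 : (n:ℤ) = 4*(f:ℤ)+1 := by exact_mod_cast hnf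
  have t00 : 16 * ((cycNum n f α 0 0 : ℕ) : ℤ) = (n:ℤ) - 7 + 2*x := hTab 0 (by norm_num) 0 (by norm_num)
  have t01 : 16 * ((cycNum n f α 0 1 : ℕ) : ℤ) = (n:ℤ) + 1 + 2*x - 8*(-1) := hTab 0 (by norm_num) 1 (by norm_num)
  have t02 : 16 * ((cycNum n f α 0 2 : ℕ) : ℤ) = (n:ℤ) + 1 - 6*x := hTab 0 (by norm_num) 2 (by norm_num)
  have t03 : 16 * ((cycNum n f α 0 3 : ℕ) : ℤ) = (n:ℤ) + 1 + 2*x + 8*(-1) := hTab 0 (by norm_num) 3 (by norm_num)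
  have t10 : 16 * ((cycNum n f α 1 0 : ℕ) : ℤ) = (n:ℤ) - 3 - 2*x := hTab 1 (by norm_num) 0 (by norm_num)
  have t11 : 16 * ((cycNum n f α 1 1 : ℕ) : ℤ) = (n:ℤ) - 3 - 2*x := hTab 1 (by norm_num) 1 (by norm_num)
  have t12 : 16 * ((cycNum n f α 1 2 : ℕ) : ℤ) = (n:ℤ) + 1 + 2*x + 8*(-1) := hTab 1 (by norm_num) 2 (by norm_num)
  have t13 : 16 * ((cycNum n f α 1 3 : ℕ) : ℤ) = (n:ℤ) + 1 + 2*x - 8*(-1) := hTab 1 (by norm_num) 3 (by norm_num)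
  have t20 : 16 * ((cycNum n f α 2 0 : ℕ) : ℤ) = (n:ℤ) - 7 + 2*x := hTab 2 (by norm_num) 0 (by norm_num)
  have t21 : 16 * ((cycNum n f α 2 1 : ℕ) : ℤ) = (n:ℤ) - 3 - 2*x := hTab 2 (by norm_num) 1 (by norm_num)
  have t22 : 16 * ((cycNum n f α 2 2 : ℕ) : ℤ) = (n:ℤ) - 7 + 2*x := hTab 2 (by norm_num) 2 (by norm_num)
  have t23 : 16 * ((cycNum n f α 2 3 : ℕ) : ℤ) = (n:ℤ) - 3 - 2*x := hTab 2 (by norm_num) 3 (by norm_num)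
  have t30 : 16 * ((cycNum n f α 3 0 : ℕ) : ℤ) = (n:ℤ) - 3 - 2*x := hTab 3 (by norm_num) 0 (by norm_num)
  have t31 : 16 * ((cycNum n f α 3 1 : ℕ) : ℤ) = (n:ℤ) + 1 + 2*x + 8*(-1) := hTab 3 (by norm_num) 1 (by norm_num)
  have t32 : 16 * ((cycNum n f α 3 2 : ℕ) : ℤ) = (n:ℤ) + 1 + 2*x - 8*(-1) := hTab 3 (by norm_num) 2 (by norm_num)
  have t33 : 16 * ((cycNum n f α 3 3 : ℕ) : ℤ) = (n:ℤ) - 3 - 2*x := hTab 3 (by norm_num) 3 (by norm_num)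
  by_cases hδ : δ = 0
  · left
    subst hδ
    rw [binCorr_val_zero hnf hf1 hord 0 1 0 2 (by norm_num) (by norm_num) (by norm_num) (by norm_num) (by norm_num) (by norm_num),
      binCorr_val_zero hnf hf1 hord 0 2 0 1 (by norm_num) (by norm_num) (by norm_num) (by norm_num) (by norm_num) (by norm_num)]
    norm_num
    linarith
  · obtain ⟨k, hk, hσk⟩ := exists_mem hf1 hord hδ hα
    interval_cases k
    · right
      rw [binCorr_val_shift hp hnf hf1 hα hord hnz 0 (by norm_num) δ hσk 0 1 0 2 (by norm_num) (by norm_num) (by norm_num) (by norm_num) (by norm_num) (by norm_num),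
          binCorr_val_shift hp hnf hf1 hα hord hnz 0 (by norm_num) δ hσk 0 2 0 1 (by norm_num) (by norm_num) (by norm_num) (by norm_num) (by norm_num) (by norm_num)]
      norm_num
      linarith [t00, t01, t02, t03, t10, t11, t12, t13, t20, t21, t22, t23, t30, t31, t32, t33]
    · left
      rw [binCorr_val_shift hp hnf hf1 hα hord hnz 1 (by norm_num) δ hσk 0 1 0 2 (by norm_num) (by norm_num) (by norm_num) (by norm_num) (by norm_num) (by norm_num),
          binCorr_val_shift hp hnf hf1 hα hord hnz 1 (by norm_num) δ hσk 0 2 0 1 (by norm_num) (by norm_num) (by norm_num) (by norm_num) (by norm_num) (by norm_num)]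
      norm_num
      linarith [t00, t01, t02, t03, t10, t11, t12, t13, t20, t21, t22, t23, t30, t31, t32, t33]
    · right
      rw [binCorr_val_shift hp hnf hf1 hα hord hnz 2 (by norm_num) δ hσk 0 1 0 2 (by norm_num) (by norm_num) (by norm_num) (by norm_num) (by norm_num) (by norm_num),
          binCorr_val_shift hp hnf hf1 hα hord hnz 2 (by norm_num) δ hσk 0 2 0 1 (by norm_num) (by norm_num) (by norm_num) (by norm_num) (by norm_num) (by norm_num)]
      norm_num
      linarith [t00, t01, t02, t03, t10, t11, t12, t13, t20, t21, t22, t23, t30, t31, t32, t33]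
    · left
      rw [binCorr_val_shift hp hnf hf1 hα hord hnz 3 (by norm_num) δ hσk 0 1 0 2 (by norm_num) (by norm_num) (by norm_num) (by norm_num) (by norm_num) (by norm_num),
          binCorr_val_shift hp hnf hf1 hα hord hnz 3 (by norm_num) δ hσk 0 2 0 1 (by norm_num) (by norm_num) (by norm_num) (by norm_num) (by norm_num) (by norm_num)]
      norm_num
      linarith [t00, t01, t02, t03, t10, t11, t12, t13, t20, t21, t22, t23, t30, t31, t32, t33]

lemma evenP2 {n f : ℕ} {α : ZMod n} (hp : n.Prime) (hnf : n = 4*f+1) (hf1 : 0 < f)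
    (hα : ∀ v : ZMod n, v ≠ 0 → ∃ k : ℕ, v = α ^ k)
    (hord : ∀ m m' : ℕ, (α ^ m = α ^ m' ↔ m % (4*f) = m' % (4*f)))
    (hnz : ∀ m : ℕ, α ^ m ≠ 0) (x : ℤ)
    (hTab : ∀ i < 4, ∀ j < 4, 16 * (cycNum n f α i j : ℤ) = oddTable16 (n : ℤ) x (-1) i j)
    (σ : ZMod n) (hσ0 : σ ≠ 0) :
    binCorr n (cycSeq n f α 0 2) (cycSeq n f α 0 2) σ
      + binCorr n (cycSeq n f α 2 3) (cycSeq n f α 2 3) σ = -2 := by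
  have hn4 : (n:ℤ) = 4*(f:ℤ)+1 := by exact_mod_cast hnf
  have t00 : 16 * ((cycNum n f α 0 0 : ℕ) : ℤ) = (n:ℤ) - 7 + 2*x := hTab 0 (by norm_num) 0 (by norm_num)
  have t01 : 16 * ((cycNum n f α 0 1 : ℕ) : ℤ) = (n:ℤ) + 1 + 2*x - 8*(-1) := hTab 0 (by norm_num) 1 (by norm_num)
  have t02 : 16 * ((cycNum n f α 0 2 : ℕ) : ℤ) = (n:ℤ) + 1 - 6*x := hTab 0 (by norm_num) 2 (by norm_num)
  have t03 : 16 * ((cycNum n f α 0 3 : ℕ) : ℤ) = (n:ℤ) + 1 + 2*x + 8*(-1) := hTab 0 (by norm_num) 3 (by norm_num)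
  have t10 : 16 * ((cycNum n f α 1 0 : ℕ) : ℤ) = (n:ℤ) - 3 - 2*x := hTab 1 (by norm_num) 0 (by norm_num)
  have t11 : 16 * ((cycNum n f α 1 1 : ℕ) : ℤ) = (n:ℤ) - 3 - 2*x := hTab 1 (by norm_num) 1 (by norm_num)
  have t12 : 16 * ((cycNum n f α 1 2 : ℕ) : ℤ) = (n:ℤ) + 1 + 2*x + 8*(-1) := hTab 1 (by norm_num) 2 (by norm_num)
  have t13 : 16 * ((cycNum n f α 1 3 : ℕ) : ℤ) = (n:ℤ) + 1 + 2*x - 8*(-1) := hTab 1 (by norm_num) 3 (by norm_num)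
  have t20 : 16 * ((cycNum n f α 2 0 : ℕ) : ℤ) = (n:ℤ) - 7 + 2*x := hTab 2 (by norm_num) 0 (by norm_num)
  have t21 : 16 * ((cycNum n f α 2 1 : ℕ) : ℤ) = (n:ℤ) - 3 - 2*x := hTab 2 (by norm_num) 1 (by norm_num)
  have t22 : 16 * ((cycNum n f α 2 2 : ℕ) : ℤ) = (n:ℤ) - 7 + 2*x := hTab 2 (by norm_num) 2 (by norm_num)
  have t23 : 16 * ((cycNum n f α 2 3 : ℕ) : ℤ) = (n:ℤ) - 3 - 2*x := hTab 2 (by norm_num) 3 (by norm_num)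
  have t30 : 16 * ((cycNum n f α 3 0 : ℕ) : ℤ) = (n:ℤ) - 3 - 2*x := hTab 3 (by norm_num) 0 (by norm_num)
  have t31 : 16 * ((cycNum n f α 3 1 : ℕ) : ℤ) = (n:ℤ) + 1 + 2*x + 8*(-1) := hTab 3 (by norm_num) 1 (by norm_num)
  have t32 : 16 * ((cycNum n f α 3 2 : ℕ) : ℤ) = (n:ℤ) + 1 + 2*x - 8*(-1) := hTab 3 (by norm_num) 2 (by norm_num)
  have t33 : 16 * ((cycNum n f α 3 3 : ℕ) : ℤ) = (n:ℤ) - 3 - 2*x := hTab 3 (by norm_num) 3 (by norm_num)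
  obtain ⟨k, hk, hσk⟩ := exists_mem hf1 hord hσ0 hα
  interval_cases k
  · rw [binCorr_val_shift hp hnf hf1 hα hord hnz 0 (by norm_num) σ hσk 0 2 0 2 (by norm_num) (by norm_num) (by norm_num) (by norm_num) (by norm_num) (by norm_num),
        binCorr_val_shift hp hnf hf1 hα hord hnz 0 (by norm_num) σ hσk 2 3 2 3 (by norm_num) (by norm_num) (by norm_num) (by norm_num) (by norm_num) (by norm_num)]
    norm_num
    linarith [t00, t01, t02, t03, t10, t11, t12, t13, t20, t21, t22, t23, t30, t31, t32, t33]
  · rw [binCorr_val_shift hp hnf hf1 hα hord hnz 1 (by norm_num) σ hσk 0 2 0 2 (by norm_num) (by norm_num) (by norm_num) (by norm_num) (by norm_num) (by norm_num),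
        binCorr_val_shift hp hnf hf1 hα hord hnz 1 (by norm_num) σ hσk 2 3 2 3 (by norm_num) (by norm_num) (by norm_num) (by norm_num) (by norm_num) (by norm_num)]
    norm_num
    linarith [t00, t01, t02, t03, t10, t11, t12, t13, t20, t21, t22, t23, t30, t31, t32, t33]
  · rw [binCorr_val_shift hp hnf hf1 hα hord hnz 2 (by norm_num) σ hσk 0 2 0 2 (by norm_num) (by norm_num) (by norm_num) (by norm_num) (by norm_num) (by norm_num),
        binCorr_val_shift hp hnf hf1 hα hord hnz 2 (by norm_num) σ hσk 2 3 2 3 (by norm_num) (by norm_num) (by norm_num) (by norm_num) (by norm_num) (by norm_num)]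
    norm_num
    linarith [t00, t01, t02, t03, t10, t11, t12, t13, t20, t21, t22, t23, t30, t31, t32, t33]
  · rw [binCorr_val_shift hp hnf hf1 hα hord hnz 3 (by norm_num) σ hσk 0 2 0 2 (by norm_num) (by norm_num) (by norm_num) (by norm_num) (by norm_num) (by norm_num),
        binCorr_val_shift hp hnf hf1 hα hord hnz 3 (by norm_num) σ hσk 2 3 2 3 (by norm_num) (by norm_num) (by norm_num) (by norm_num) (by norm_num) (by norm_num)]
    norm_num
    linarith [t00, t01, t02, t03, t10, t11, t12, t13, t20, t21, t22, t23, t30, t31, t32, t33]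

lemma oddP2 {n f : ℕ} {α : ZMod n} (hp : n.Prime) (hnf : n = 4*f+1) (hf1 : 0 < f)
    (hα : ∀ v : ZMod n, v ≠ 0 → ∃ k : ℕ, v = α ^ k)
    (hord : ∀ m m' : ℕ, (α ^ m = α ^ m' ↔ m % (4*f) = m' % (4*f)))
    (hnz : ∀ m : ℕ, α ^ m ≠ 0) (x : ℤ)
    (hTab : ∀ i < 4, ∀ j < 4, 16 * (cycNum n f α i j : ℤ) = oddTable16 (n : ℤ) x (-1) i j)
    (δ : ZMod n) :
    binCorr n (cycSeq n f α 0 2) (cycSeq n f α 2 3) δ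
        + binCorr n (cycSeq n f α 2 3) (cycSeq n f α 0 2) δ = 2
      ∨ binCorr n (cycSeq n f α 0 2) (cycSeq n f α 2 3) δ
        + binCorr n (cycSeq n f α 2 3) (cycSeq n f α 0 2) δ = -2 := by
  have hn4 : (n:ℤ) = 4*(f:ℤ)+1 := by exact_mod_cast hnf
  have t00 : 16 * ((cycNum n f α 0 0 : ℕ) : ℤ) = (n:ℤ) - 7 + 2*x := hTab 0 (by norm_num) 0 (by norm_num)
  have t01 : 16 * ((cycNum n f α 0 1 : ℕ) : ℤ) = (n:ℤ) + 1 + 2*x - 8*(-1) := hTab 0 (by norm_num) 1 (by norm_num)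
  have t02 : 16 * ((cycNum n f α 0 2 : ℕ) : ℤ) = (n:ℤ) + 1 - 6*x := hTab 0 (by norm_num) 2 (by norm_num)
  have t03 : 16 * ((cycNum n f α 0 3 : ℕ) : ℤ) = (n:ℤ) + 1 + 2*x + 8*(-1) := hTab 0 (by norm_num) 3 (by norm_num)
  have t10 : 16 * ((cycNum n f α 1 0 : ℕ) : ℤ) = (n:ℤ) - 3 - 2*x := hTab 1 (by norm_num) 0 (by norm_num)
  have t11 : 16 * ((cycNum n f α 1 1 : ℕ) : ℤ) = (n:ℤ) - 3 - 2*x := hTab 1 (by norm_num) 1 (by norm_num)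
  have t12 : 16 * ((cycNum n f α 1 2 : ℕ) : ℤ) = (n:ℤ) + 1 + 2*x + 8*(-1) := hTab 1 (by norm_num) 2 (by norm_num)
  have t13 : 16 * ((cycNum n f α 1 3 : ℕ) : ℤ) = (n:ℤ) + 1 + 2*x - 8*(-1) := hTab 1 (by norm_num) 3 (by norm_num)
  have t20 : 16 * ((cycNum n f α 2 0 : ℕ) : ℤ) = (n:ℤ) - 7 + 2*x := hTab 2 (by norm_num) 0 (by norm_num)
  have t21 : 16 * ((cycNum n f α 2 1 : ℕ) : ℤ) = (n:ℤ) - 3 - 2*x := hTab 2 (by norm_num) 1 (by norm_num)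
  have t22 : 16 * ((cycNum n f α 2 2 : ℕ) : ℤ) = (n:ℤ) - 7 + 2*x := hTab 2 (by norm_num) 2 (by norm_num)
  have t23 : 16 * ((cycNum n f α 2 3 : ℕ) : ℤ) = (n:ℤ) - 3 - 2*x := hTab 2 (by norm_num) 3 (by norm_num)
  have t30 : 16 * ((cycNum n f α 3 0 : ℕ) : ℤ) = (n:ℤ) - 3 - 2*x := hTab 3 (by norm_num) 0 (by norm_num)
  have t31 : 16 * ((cycNum n f α 3 1 : ℕ) : ℤ) = (n:ℤ) + 1 + 2*x + 8*(-1) := hTab 3 (by norm_num) 1 (by norm_num)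
  have t32 : 16 * ((cycNum n f α 3 2 : ℕ) : ℤ) = (n:ℤ) + 1 + 2*x - 8*(-1) := hTab 3 (by norm_num) 2 (by norm_num)
  have t33 : 16 * ((cycNum n f α 3 3 : ℕ) : ℤ) = (n:ℤ) - 3 - 2*x := hTab 3 (by norm_num) 3 (by norm_num)
  by_cases hδ : δ = 0
  · left
    subst hδ
    rw [binCorr_val_zero hnf hf1 hord 0 2 2 3 (by norm_num) (by norm_num) (by norm_num) (by norm_num) (by norm_num) (by norm_num),
      binCorr_val_zero hnf hf1 hord 2 3 0 2 (by norm_num) (by norm_num) (by norm_num) (by norm_num) (by norm_num) (by norm_num)]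
    norm_num
    linarith
  · obtain ⟨k, hk, hσk⟩ := exists_mem hf1 hord hδ hα
    interval_cases k
    · right
      rw [binCorr_val_shift hp hnf hf1 hα hord hnz 0 (by norm_num) δ hσk 0 2 2 3 (by norm_num) (by norm_num) (by norm_num) (by norm_num) (by norm_num) (by norm_num),
          binCorr_val_shift hp hnf hf1 hα hord hnz 0 (by norm_num) δ hσk 2 3 0 2 (by norm_num) (by norm_num) (by norm_num) (by norm_num) (by norm_num) (by norm_num)]
      norm_num
      linarith [t00, t01, t02, t03, t10, t11, t12, t13, t20, t21, t22, t23, t30, t31, t32, t33]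
    · left
      rw [binCorr_val_shift hp hnf hf1 hα hord hnz 1 (by norm_num) δ hσk 0 2 2 3 (by norm_num) (by norm_num) (by norm_num) (by norm_num) (by norm_num) (by norm_num),
          binCorr_val_shift hp hnf hf1 hα hord hnz 1 (by norm_num) δ hσk 2 3 0 2 (by norm_num) (by norm_num) (by norm_num) (by norm_num) (by norm_num) (by norm_num)]
      norm_num
      linarith [t00, t01, t02, t03, t10, t11, t12, t13, t20, t21, t22, t23, t30, t31, t32, t33]
    · right
      rw [binCorr_val_shift hp hnf hf1 hα hord hnz 2 (by norm_num) δ hσk 0 2 2 3 (by norm_num) (by norm_num) (by norm_num) (by norm_num) (by norm_num) (by norm_num),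
          binCorr_val_shift hp hnf hf1 hα hord hnz 2 (by norm_num) δ hσk 2 3 0 2 (by norm_num) (by norm_num) (by norm_num) (by norm_num) (by norm_num) (by norm_num)]
      norm_num
      linarith [t00, t01, t02, t03, t10, t11, t12, t13, t20, t21, t22, t23, t30, t31, t32, t33]
    · left
      rw [binCorr_val_shift hp hnf hf1 hα hord hnz 3 (by norm_num) δ hσk 0 2 2 3 (by norm_num) (by norm_num) (by norm_num) (by norm_num) (by norm_num) (by norm_num),
          binCorr_val_shift hp hnf hf1 hα hord hnz 3 (by norm_num) δ hσk 2 3 0 2 (by norm_num) (by norm_num) (by norm_num) (by norm_num) (by norm_num) (by norm_num)]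
      norm_num
      linarith [t00, t01, t02, t03, t10, t11, t12, t13, t20, t21, t22, t23, t30, t31, t32, t33]

lemma evenP3 {n f : ℕ} {α : ZMod n} (hp : n.Prime) (hnf : n = 4*f+1) (hf1 : 0 < f)
    (hα : ∀ v : ZMod n, v ≠ 0 → ∃ k : ℕ, v = α ^ k)
    (hord : ∀ m m' : ℕ, (α ^ m = α ^ m' ↔ m % (4*f) = m' % (4*f)))
    (hnz : ∀ m : ℕ, α ^ m ≠ 0) (x : ℤ)
    (hTab : ∀ i < 4, ∀ j < 4, 16 * (cycNum n f α i j : ℤ) = oddTable16 (n : ℤ) x (-1) i j)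
    (σ : ZMod n) (hσ0 : σ ≠ 0) :
    binCorr n (cycSeq n f α 1 2) (cycSeq n f α 1 2) σ
      + binCorr n (cycSeq n f α 1 3) (cycSeq n f α 1 3) σ = -2 := by
  have hn4 : (n:ℤ) = 4*(f:ℤ)+1 := by exact_mod_cast hnf
  have t00 : 16 * ((cycNum n f α 0 0 : ℕ) : ℤ) = (n:ℤ) - 7 + 2*x := hTab 0 (by norm_num) 0 (by norm_num)
  have t01 : 16 * ((cycNum n f α 0 1 : ℕ) : ℤ) = (n:ℤ) + 1 + 2*x - 8*(-1) := hTab 0 (by norm_num) 1 (by norm_num)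
  have t02 : 16 * ((cycNum n f α 0 2 : ℕ) : ℤ) = (n:ℤ) + 1 - 6*x := hTab 0 (by norm_num) 2 (by norm_num)
  have t03 : 16 * ((cycNum n f α 0 3 : ℕ) : ℤ) = (n:ℤ) + 1 + 2*x + 8*(-1) := hTab 0 (by norm_num) 3 (by norm_num)
  have t10 : 16 * ((cycNum n f α 1 0 : ℕ) : ℤ) = (n:ℤ) - 3 - 2*x := hTab 1 (by norm_num) 0 (by norm_num)
  have t11 : 16 * ((cycNum n f α 1 1 : ℕ) : ℤ) = (n:ℤ) - 3 - 2*x := hTab 1 (by norm_num) 1 (by norm_num)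
  have t12 : 16 * ((cycNum n f α 1 2 : ℕ) : ℤ) = (n:ℤ) + 1 + 2*x + 8*(-1) := hTab 1 (by norm_num) 2 (by norm_num)
  have t13 : 16 * ((cycNum n f α 1 3 : ℕ) : ℤ) = (n:ℤ) + 1 + 2*x - 8*(-1) := hTab 1 (by norm_num) 3 (by norm_num)
  have t20 : 16 * ((cycNum n f α 2 0 : ℕ) : ℤ) = (n:ℤ) - 7 + 2*x := hTab 2 (by norm_num) 0 (by norm_num)
  have t21 : 16 * ((cycNum n f α 2 1 : ℕ) : ℤ) = (n:ℤ) - 3 - 2*x := hTab 2 (by norm_num) 1 (by norm_num)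
  have t22 : 16 * ((cycNum n f α 2 2 : ℕ) : ℤ) = (n:ℤ) - 7 + 2*x := hTab 2 (by norm_num) 2 (by norm_num)
  have t23 : 16 * ((cycNum n f α 2 3 : ℕ) : ℤ) = (n:ℤ) - 3 - 2*x := hTab 2 (by norm_num) 3 (by norm_num)
  have t30 : 16 * ((cycNum n f α 3 0 : ℕ) : ℤ) = (n:ℤ) - 3 - 2*x := hTab 3 (by norm_num) 0 (by norm_num)
  have t31 : 16 * ((cycNum n f α 3 1 : ℕ) : ℤ) = (n:ℤ) + 1 + 2*x + 8*(-1) := hTab 3 (by norm_num) 1 (by norm_num)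
  have t32 : 16 * ((cycNum n f α 3 2 : ℕ) : ℤ) = (n:ℤ) + 1 + 2*x - 8*(-1) := hTab 3 (by norm_num) 2 (by norm_num)
  have t33 : 16 * ((cycNum n f α 3 3 : ℕ) : ℤ) = (n:ℤ) - 3 - 2*x := hTab 3 (by norm_num) 3 (by norm_num)
  obtain ⟨k, hk, hσk⟩ := exists_mem hf1 hord hσ0 hα
  interval_cases k
  · rw [binCorr_val_shift hp hnf hf1 hα hord hnz 0 (by norm_num) σ hσk 1 2 1 2 (by norm_num) (by norm_num) (by norm_num) (by norm_num) (by norm_num) (by norm_num),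
        binCorr_val_shift hp hnf hf1 hα hord hnz 0 (by norm_num) σ hσk 1 3 1 3 (by norm_num) (by norm_num) (by norm_num) (by norm_num) (by norm_num) (by norm_num)]
    norm_num
    linarith [t00, t01, t02, t03, t10, t11, t12, t13, t20, t21, t22, t23, t30, t31, t32, t33]
  · rw [binCorr_val_shift hp hnf hf1 hα hord hnz 1 (by norm_num) σ hσk 1 2 1 2 (by norm_num) (by norm_num) (by norm_num) (by norm_num) (by norm_num) (by norm_num),
        binCorr_val_shift hp hnf hf1 hα hord hnz 1 (by norm_num) σ hσk 1 3 1 3 (by norm_num) (by norm_num) (by norm_num) (by norm_num) (by norm_num) (by norm_num)]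
    norm_num
    linarith [t00, t01, t02, t03, t10, t11, t12, t13, t20, t21, t22, t23, t30, t31, t32, t33]
  · rw [binCorr_val_shift hp hnf hf1 hα hord hnz 2 (by norm_num) σ hσk 1 2 1 2 (by norm_num) (by norm_num) (by norm_num) (by norm_num) (by norm_num) (by norm_num),
        binCorr_val_shift hp hnf hf1 hα hord hnz 2 (by norm_num) σ hσk 1 3 1 3 (by norm_num) (by norm_num) (by norm_num) (by norm_num) (by norm_num) (by norm_num)]
    norm_num
    linarith [t00, t01, t02, t03, t10, t11, t12, t13, t20, t21, t22, t23, t30, t31, t32, t33]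
  · rw [binCorr_val_shift hp hnf hf1 hα hord hnz 3 (by norm_num) σ hσk 1 2 1 2 (by norm_num) (by norm_num) (by norm_num) (by norm_num) (by norm_num) (by norm_num),
        binCorr_val_shift hp hnf hf1 hα hord hnz 3 (by norm_num) σ hσk 1 3 1 3 (by norm_num) (by norm_num) (by norm_num) (by norm_num) (by norm_num) (by norm_num)]
    norm_num
    linarith [t00, t01, t02, t03, t10, t11, t12, t13, t20, t21, t22, t23, t30, t31, t32, t33]

lemma oddP3 {n f : ℕ} {α : ZMod n} (hp : n.Prime) (hnf : n = 4*f+1) (hf1 : 0 < f)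
    (hα : ∀ v : ZMod n, v ≠ 0 → ∃ k : ℕ, v = α ^ k)
    (hord : ∀ m m' : ℕ, (α ^ m = α ^ m' ↔ m % (4*f) = m' % (4*f)))
    (hnz : ∀ m : ℕ, α ^ m ≠ 0) (x : ℤ)
    (hTab : ∀ i < 4, ∀ j < 4, 16 * (cycNum n f α i j : ℤ) = oddTable16 (n : ℤ) x (-1) i j)
    (δ : ZMod n) :
    binCorr n (cycSeq n f α 1 2) (cycSeq n f α 1 3) δ
        + binCorr n (cycSeq n f α 1 3) (cycSeq n f α 1 2) δ = 2
      ∨ binCorr n (cycSeq n f α 1 2) (cycSeq n f α 1 3) δ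
        + binCorr n (cycSeq n f α 1 3) (cycSeq n f α 1 2) δ = -2 := by
  have hn4 : (n:ℤ) = 4*(f:ℤ)+1 := by exact_mod_cast hnf
  have t00 : 16 * ((cycNum n f α 0 0 : ℕ) : ℤ) = (n:ℤ) - 7 + 2*x := hTab 0 (by norm_num) 0 (by norm_num)
  have t01 : 16 * ((cycNum n f α 0 1 : ℕ) : ℤ) = (n:ℤ) + 1 + 2*x - 8*(-1) := hTab 0 (by norm_num) 1 (by norm_num)
  have t02 : 16 * ((cycNum n f α 0 2 : ℕ) : ℤ) = (n:ℤ) + 1 - 6*x := hTab 0 (by norm_num) 2 (by norm_num)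
  have t03 : 16 * ((cycNum n f α 0 3 : ℕ) : ℤ) = (n:ℤ) + 1 + 2*x + 8*(-1) := hTab 0 (by norm_num) 3 (by norm_num)
  have t10 : 16 * ((cycNum n f α 1 0 : ℕ) : ℤ) = (n:ℤ) - 3 - 2*x := hTab 1 (by norm_num) 0 (by norm_num)
  have t11 : 16 * ((cycNum n f α 1 1 : ℕ) : ℤ) = (n:ℤ) - 3 - 2*x := hTab 1 (by norm_num) 1 (by norm_num)
  have t12 : 16 * ((cycNum n f α 1 2 : ℕ) : ℤ) = (n:ℤ) + 1 + 2*x + 8*(-1) := hTab 1 (by norm_num) 2 (by norm_num)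
  have t13 : 16 * ((cycNum n f α 1 3 : ℕ) : ℤ) = (n:ℤ) + 1 + 2*x - 8*(-1) := hTab 1 (by norm_num) 3 (by norm_num)
  have t20 : 16 * ((cycNum n f α 2 0 : ℕ) : ℤ) = (n:ℤ) - 7 + 2*x := hTab 2 (by norm_num) 0 (by norm_num)
  have t21 : 16 * ((cycNum n f α 2 1 : ℕ) : ℤ) = (n:ℤ) - 3 - 2*x := hTab 2 (by norm_num) 1 (by norm_num)
  have t22 : 16 * ((cycNum n f α 2 2 : ℕ) : ℤ) = (n:ℤ) - 7 + 2*x := hTab 2 (by norm_num) 2 (by norm_num)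
  have t23 : 16 * ((cycNum n f α 2 3 : ℕ) : ℤ) = (n:ℤ) - 3 - 2*x := hTab 2 (by norm_num) 3 (by norm_num)
  have t30 : 16 * ((cycNum n f α 3 0 : ℕ) : ℤ) = (n:ℤ) - 3 - 2*x := hTab 3 (by norm_num) 0 (by norm_num)
  have t31 : 16 * ((cycNum n f α 3 1 : ℕ) : ℤ) = (n:ℤ) + 1 + 2*x + 8*(-1) := hTab 3 (by norm_num) 1 (by norm_num)
  have t32 : 16 * ((cycNum n f α 3 2 : ℕ) : ℤ) = (n:ℤ) + 1 + 2*x - 8*(-1) := hTab 3 (by norm_num) 2 (by norm_num)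
  have t33 : 16 * ((cycNum n f α 3 3 : ℕ) : ℤ) = (n:ℤ) - 3 - 2*x := hTab 3 (by norm_num) 3 (by norm_num)
  by_cases hδ : δ = 0
  · left
    subst hδ
    rw [binCorr_val_zero hnf hf1 hord 1 2 1 3 (by norm_num) (by norm_num) (by norm_num) (by norm_num) (by norm_num) (by norm_num),
      binCorr_val_zero hnf hf1 hord 1 3 1 2 (by norm_num) (by norm_num) (by norm_num) (by norm_num) (by norm_num) (by norm_num)]
    norm_num
    linarith
  · obtain ⟨k, hk, hσk⟩ := exists_mem hf1 hord hδ hα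
    interval_cases k
    · left
      rw [binCorr_val_shift hp hnf hf1 hα hord hnz 0 (by norm_num) δ hσk 1 2 1 3 (by norm_num) (by norm_num) (by norm_num) (by norm_num) (by norm_num) (by norm_num),
          binCorr_val_shift hp hnf hf1 hα hord hnz 0 (by norm_num) δ hσk 1 3 1 2 (by norm_num) (by norm_num) (by norm_num) (by norm_num) (by norm_num) (by norm_num)]
      norm_num
      linarith [t00, t01, t02, t03, t10, t11, t12, t13, t20, t21, t22, t23, t30, t31, t32, t33]
    · right
      rw [binCorr_val_shift hp hnf hf1 hα hord hnz 1 (by norm_num) δ hσk 1 2 1 3 (by norm_num) (by norm_num) (by norm_num) (by norm_num) (by norm_num) (by norm_num),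
          binCorr_val_shift hp hnf hf1 hα hord hnz 1 (by norm_num) δ hσk 1 3 1 2 (by norm_num) (by norm_num) (by norm_num) (by norm_num) (by norm_num) (by norm_num)]
      norm_num
      linarith [t00, t01, t02, t03, t10, t11, t12, t13, t20, t21, t22, t23, t30, t31, t32, t33]
    · left
      rw [binCorr_val_shift hp hnf hf1 hα hord hnz 2 (by norm_num) δ hσk 1 2 1 3 (by norm_num) (by norm_num) (by norm_num) (by norm_num) (by norm_num) (by norm_num),
          binCorr_val_shift hp hnf hf1 hα hord hnz 2 (by norm_num) δ hσk 1 3 1 2 (by norm_num) (by norm_num) (by norm_num) (by norm_num) (by norm_num) (by norm_num)]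
      norm_num
      linarith [t00, t01, t02, t03, t10, t11, t12, t13, t20, t21, t22, t23, t30, t31, t32, t33]
    · right
      rw [binCorr_val_shift hp hnf hf1 hα hord hnz 3 (by norm_num) δ hσk 1 2 1 3 (by norm_num) (by norm_num) (by norm_num) (by norm_num) (by norm_num) (by norm_num),
          binCorr_val_shift hp hnf hf1 hα hord hnz 3 (by norm_num) δ hσk 1 3 1 2 (by norm_num) (by norm_num) (by norm_num) (by norm_num) (by norm_num) (by norm_num)]
      norm_num
      linarith [t00, t01, t02, t03, t10, t11, t12, t13, t20, t21, t22, t23, t30, t31, t32, t33]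

lemma evenP4 {n f : ℕ} {α : ZMod n} (hp : n.Prime) (hnf : n = 4*f+1) (hf1 : 0 < f)
    (hα : ∀ v : ZMod n, v ≠ 0 → ∃ k : ℕ, v = α ^ k)
    (hord : ∀ m m' : ℕ, (α ^ m = α ^ m' ↔ m % (4*f) = m' % (4*f)))
    (hnz : ∀ m : ℕ, α ^ m ≠ 0) (x : ℤ)
    (hTab : ∀ i < 4, ∀ j < 4, 16 * (cycNum n f α i j : ℤ) = oddTable16 (n : ℤ) x (-1) i j)
    (σ : ZMod n) (hσ0 : σ ≠ 0) :
    binCorr n (cycSeq n f α 1 3) (cycSeq n f α 1 3) σ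
      + binCorr n (cycSeq n f α 0 3) (cycSeq n f α 0 3) σ = -2 := by
  have hn4 : (n:ℤ) = 4*(f:ℤ)+1 := by exact_mod_cast hnf
  have t00 : 16 * ((cycNum n f α 0 0 : ℕ) : ℤ) = (n:ℤ) - 7 + 2*x := hTab 0 (by norm_num) 0 (by norm_num)
  have t01 : 16 * ((cycNum n f α 0 1 : ℕ) : ℤ) = (n:ℤ) + 1 + 2*x - 8*(-1) := hTab 0 (by norm_num) 1 (by norm_num)
  have t02 : 16 * ((cycNum n f α 0 2 : ℕ) : ℤ) = (n:ℤ) + 1 - 6*x := hTab 0 (by norm_num) 2 (by norm_num)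
  have t03 : 16 * ((cycNum n f α 0 3 : ℕ) : ℤ) = (n:ℤ) + 1 + 2*x + 8*(-1) := hTab 0 (by norm_num) 3 (by norm_num)
  have t10 : 16 * ((cycNum n f α 1 0 : ℕ) : ℤ) = (n:ℤ) - 3 - 2*x := hTab 1 (by norm_num) 0 (by norm_num)
  have t11 : 16 * ((cycNum n f α 1 1 : ℕ) : ℤ) = (n:ℤ) - 3 - 2*x := hTab 1 (by norm_num) 1 (by norm_num)
  have t12 : 16 * ((cycNum n f α 1 2 : ℕ) : ℤ) = (n:ℤ) + 1 + 2*x + 8*(-1) := hTab 1 (by norm_num) 2 (by norm_num)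
  have t13 : 16 * ((cycNum n f α 1 3 : ℕ) : ℤ) = (n:ℤ) + 1 + 2*x - 8*(-1) := hTab 1 (by norm_num) 3 (by norm_num)
  have t20 : 16 * ((cycNum n f α 2 0 : ℕ) : ℤ) = (n:ℤ) - 7 + 2*x := hTab 2 (by norm_num) 0 (by norm_num)
  have t21 : 16 * ((cycNum n f α 2 1 : ℕ) : ℤ) = (n:ℤ) - 3 - 2*x := hTab 2 (by norm_num) 1 (by norm_num)
  have t22 : 16 * ((cycNum n f α 2 2 : ℕ) : ℤ) = (n:ℤ) - 7 + 2*x := hTab 2 (by norm_num) 2 (by norm_num)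
  have t23 : 16 * ((cycNum n f α 2 3 : ℕ) : ℤ) = (n:ℤ) - 3 - 2*x := hTab 2 (by norm_num) 3 (by norm_num)
  have t30 : 16 * ((cycNum n f α 3 0 : ℕ) : ℤ) = (n:ℤ) - 3 - 2*x := hTab 3 (by norm_num) 0 (by norm_num)
  have t31 : 16 * ((cycNum n f α 3 1 : ℕ) : ℤ) = (n:ℤ) + 1 + 2*x + 8*(-1) := hTab 3 (by norm_num) 1 (by norm_num)
  have t32 : 16 * ((cycNum n f α 3 2 : ℕ) : ℤ) = (n:ℤ) + 1 + 2*x - 8*(-1) := hTab 3 (by norm_num) 2 (by norm_num)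
  have t33 : 16 * ((cycNum n f α 3 3 : ℕ) : ℤ) = (n:ℤ) - 3 - 2*x := hTab 3 (by norm_num) 3 (by norm_num)
  obtain ⟨k, hk, hσk⟩ := exists_mem hf1 hord hσ0 hα
  interval_cases k
  · rw [binCorr_val_shift hp hnf hf1 hα hord hnz 0 (by norm_num) σ hσk 1 3 1 3 (by norm_num) (by norm_num) (by norm_num) (by norm_num) (by norm_num) (by norm_num),
        binCorr_val_shift hp hnf hf1 hα hord hnz 0 (by norm_num) σ hσk 0 3 0 3 (by norm_num) (by norm_num) (by norm_num) (by norm_num) (by norm_num) (by norm_num)]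
    norm_num
    linarith [t00, t01, t02, t03, t10, t11, t12, t13, t20, t21, t22, t23, t30, t31, t32, t33]
  · rw [binCorr_val_shift hp hnf hf1 hα hord hnz 1 (by norm_num) σ hσk 1 3 1 3 (by norm_num) (by norm_num) (by norm_num) (by norm_num) (by norm_num) (by norm_num),
        binCorr_val_shift hp hnf hf1 hα hord hnz 1 (by norm_num) σ hσk 0 3 0 3 (by norm_num) (by norm_num) (by norm_num) (by norm_num) (by norm_num) (by norm_num)]
    norm_num
    linarith [t00, t01, t02, t03, t10, t11, t12, t13, t20, t21, t22, t23, t30, t31, t32, t33]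
  · rw [binCorr_val_shift hp hnf hf1 hα hord hnz 2 (by norm_num) σ hσk 1 3 1 3 (by norm_num) (by norm_num) (by norm_num) (by norm_num) (by norm_num) (by norm_num),
        binCorr_val_shift hp hnf hf1 hα hord hnz 2 (by norm_num) σ hσk 0 3 0 3 (by norm_num) (by norm_num) (by norm_num) (by norm_num) (by norm_num) (by norm_num)]
    norm_num
    linarith [t00, t01, t02, t03, t10, t11, t12, t13, t20, t21, t22, t23, t30, t31, t32, t33]
  · rw [binCorr_val_shift hp hnf hf1 hα hord hnz 3 (by norm_num) σ hσk 1 3 1 3 (by norm_num) (by norm_num) (by norm_num) (by norm_num) (by norm_num) (by norm_num),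
        binCorr_val_shift hp hnf hf1 hα hord hnz 3 (by norm_num) σ hσk 0 3 0 3 (by norm_num) (by norm_num) (by norm_num) (by norm_num) (by norm_num) (by norm_num)]
    norm_num
    linarith [t00, t01, t02, t03, t10, t11, t12, t13, t20, t21, t22, t23, t30, t31, t32, t33]

lemma oddP4 {n f : ℕ} {α : ZMod n} (hp : n.Prime) (hnf : n = 4*f+1) (hf1 : 0 < f)
    (hα : ∀ v : ZMod n, v ≠ 0 → ∃ k : ℕ, v = α ^ k)
    (hord : ∀ m m' : ℕ, (α ^ m = α ^ m' ↔ m % (4*f) = m' % (4*f)))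
    (hnz : ∀ m : ℕ, α ^ m ≠ 0) (x : ℤ)
    (hTab : ∀ i < 4, ∀ j < 4, 16 * (cycNum n f α i j : ℤ) = oddTable16 (n : ℤ) x (-1) i j)
    (δ : ZMod n) :
    binCorr n (cycSeq n f α 1 3) (cycSeq n f α 0 3) δ
        + binCorr n (cycSeq n f α 0 3) (cycSeq n f α 1 3) δ = 2
      ∨ binCorr n (cycSeq n f α 1 3) (cycSeq n f α 0 3) δ
        + binCorr n (cycSeq n f α 0 3) (cycSeq n f α 1 3) δ = -2 := by
  have hn4 : (n:ℤ) = 4*(f:ℤ)+1 := by exact_mod_cast hnf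
  have t00 : 16 * ((cycNum n f α 0 0 : ℕ) : ℤ) = (n:ℤ) - 7 + 2*x := hTab 0 (by norm_num) 0 (by norm_num)
  have t01 : 16 * ((cycNum n f α 0 1 : ℕ) : ℤ) = (n:ℤ) + 1 + 2*x - 8*(-1) := hTab 0 (by norm_num) 1 (by norm_num)
  have t02 : 16 * ((cycNum n f α 0 2 : ℕ) : ℤ) = (n:ℤ) + 1 - 6*x := hTab 0 (by norm_num) 2 (by norm_num)
  have t03 : 16 * ((cycNum n f α 0 3 : ℕ) : ℤ) = (n:ℤ) + 1 + 2*x + 8*(-1) := hTab 0 (by norm_num) 3 (by norm_num)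
  have t10 : 16 * ((cycNum n f α 1 0 : ℕ) : ℤ) = (n:ℤ) - 3 - 2*x := hTab 1 (by norm_num) 0 (by norm_num)
  have t11 : 16 * ((cycNum n f α 1 1 : ℕ) : ℤ) = (n:ℤ) - 3 - 2*x := hTab 1 (by norm_num) 1 (by norm_num)
  have t12 : 16 * ((cycNum n f α 1 2 : ℕ) : ℤ) = (n:ℤ) + 1 + 2*x + 8*(-1) := hTab 1 (by norm_num) 2 (by norm_num)
  have t13 : 16 * ((cycNum n f α 1 3 : ℕ) : ℤ) = (n:ℤ) + 1 + 2*x - 8*(-1) := hTab 1 (by norm_num) 3 (by norm_num)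
  have t20 : 16 * ((cycNum n f α 2 0 : ℕ) : ℤ) = (n:ℤ) - 7 + 2*x := hTab 2 (by norm_num) 0 (by norm_num)
  have t21 : 16 * ((cycNum n f α 2 1 : ℕ) : ℤ) = (n:ℤ) - 3 - 2*x := hTab 2 (by norm_num) 1 (by norm_num)
  have t22 : 16 * ((cycNum n f α 2 2 : ℕ) : ℤ) = (n:ℤ) - 7 + 2*x := hTab 2 (by norm_num) 2 (by norm_num)
  have t23 : 16 * ((cycNum n f α 2 3 : ℕ) : ℤ) = (n:ℤ) - 3 - 2*x := hTab 2 (by norm_num) 3 (by norm_num)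
  have t30 : 16 * ((cycNum n f α 3 0 : ℕ) : ℤ) = (n:ℤ) - 3 - 2*x := hTab 3 (by norm_num) 0 (by norm_num)
  have t31 : 16 * ((cycNum n f α 3 1 : ℕ) : ℤ) = (n:ℤ) + 1 + 2*x + 8*(-1) := hTab 3 (by norm_num) 1 (by norm_num)
  have t32 : 16 * ((cycNum n f α 3 2 : ℕ) : ℤ) = (n:ℤ) + 1 + 2*x - 8*(-1) := hTab 3 (by norm_num) 2 (by norm_num)
  have t33 : 16 * ((cycNum n f α 3 3 : ℕ) : ℤ) = (n:ℤ) - 3 - 2*x := hTab 3 (by norm_num) 3 (by norm_num)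
  by_cases hδ : δ = 0
  · left
    subst hδ
    rw [binCorr_val_zero hnf hf1 hord 1 3 0 3 (by norm_num) (by norm_num) (by norm_num) (by norm_num) (by norm_num) (by norm_num),
      binCorr_val_zero hnf hf1 hord 0 3 1 3 (by norm_num) (by norm_num) (by norm_num) (by norm_num) (by norm_num) (by norm_num)]
    norm_num
    linarith
  · obtain ⟨k, hk, hσk⟩ := exists_mem hf1 hord hδ hα
    interval_cases k
    · left
      rw [binCorr_val_shift hp hnf hf1 hα hord hnz 0 (by norm_num) δ hσk 1 3 0 3 (by norm_num) (by norm_num) (by norm_num) (by norm_num) (by norm_num) (by norm_num),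
          binCorr_val_shift hp hnf hf1 hα hord hnz 0 (by norm_num) δ hσk 0 3 1 3 (by norm_num) (by norm_num) (by norm_num) (by norm_num) (by norm_num) (by norm_num)]
      norm_num
      linarith [t00, t01, t02, t03, t10, t11, t12, t13, t20, t21, t22, t23, t30, t31, t32, t33]
    · right
      rw [binCorr_val_shift hp hnf hf1 hα hord hnz 1 (by norm_num) δ hσk 1 3 0 3 (by norm_num) (by norm_num) (by norm_num) (by norm_num) (by norm_num) (by norm_num),
          binCorr_val_shift hp hnf hf1 hα hord hnz 1 (by norm_num) δ hσk 0 3 1 3 (by norm_num) (by norm_num) (by norm_num) (by norm_num) (by norm_num) (by norm_num)]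
      norm_num
      linarith [t00, t01, t02, t03, t10, t11, t12, t13, t20, t21, t22, t23, t30, t31, t32, t33]
    · left
      rw [binCorr_val_shift hp hnf hf1 hα hord hnz 2 (by norm_num) δ hσk 1 3 0 3 (by norm_num) (by norm_num) (by norm_num) (by norm_num) (by norm_num) (by norm_num),
          binCorr_val_shift hp hnf hf1 hα hord hnz 2 (by norm_num) δ hσk 0 3 1 3 (by norm_num) (by norm_num) (by norm_num) (by norm_num) (by norm_num) (by norm_num)]
      norm_num
      linarith [t00, t01, t02, t03, t10, t11, t12, t13, t20, t21, t22, t23, t30, t31, t32, t33]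
    · right
      rw [binCorr_val_shift hp hnf hf1 hα hord hnz 3 (by norm_num) δ hσk 1 3 0 3 (by norm_num) (by norm_num) (by norm_num) (by norm_num) (by norm_num) (by norm_num),
          binCorr_val_shift hp hnf hf1 hα hord hnz 3 (by norm_num) δ hσk 0 3 1 3 (by norm_num) (by norm_num) (by norm_num) (by norm_num) (by norm_num) (by norm_num)]
      norm_num
      linarith [t00, t01, t02, t03, t10, t11, t12, t13, t20, t21, t22, t23, t30, t31, t32, t33]

lemma neg1_sq_mul (v : ℕ) (X : ℤ) : (-1:ℤ)^v * ((-1:ℤ)^v * X) = X := by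
  rw [← mul_assoc, ← pow_add, Even.neg_one_pow ⟨v, rfl⟩, one_mul]

lemma main_aux {n : ℕ} (hn : 0 < n) (hodd2 : n % 2 = 1)
    (a b : ZMod n → ZMod 2) (e0 e1 e2 : ZMod 2) (he : e0 + e1 + e2 = 0)
    (hE : ∀ σ : ZMod n, σ ≠ 0 → binCorr n a a σ + binCorr n b b σ = -2)
    (hO : ∀ δ : ZMod n, binCorr n a b δ + binCorr n b a δ = 2
          ∨ binCorr n a b δ + binCorr n b a δ = -2) :
    ∀ τ : ℕ, 1 ≤ τ → τ < 2*n →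
      quadCorr (2*n) (constructionI n a b b a e0 e1 e2) (constructionI n a b b a e0 e1 e2)
          ((τ : ℕ) : ZMod (2*n)) = 2
      ∨ quadCorr (2*n) (constructionI n a b b a e0 e1 e2) (constructionI n a b b a e0 e1 e2)
          ((τ : ℕ) : ZMod (2*n)) = -2 := by
  haveI : NeZero n := ⟨hn.ne'⟩
  haveI : NeZero (2*n) := ⟨by omega⟩
  intro τ hτ1 hτ2
  set lam : ZMod n := (((n + 1) / 2 : ℕ) : ZMod n) with hlam
  have hlam2 : lam + lam = 1 := by
    rw [hlam, ← Nat.cast_add]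
    have h2 : (n + 1) / 2 + (n + 1) / 2 = n + 1 := by omega
    rw [h2]
    push_cast [ZMod.natCast_self]
    ring
  set c := interleaveSeq n a (fun i => e0 + b (i + lam)) with hc
  set d := interleaveSeq n (fun i => e1 + b i) (fun i => e2 + a (i + lam)) with hd
  have hu : constructionI n a b b a e0 e1 e2 = fun i => grayInv (c i) (d i) := rfl
  rw [hu]
  have h01 : e0 + e1 = e2 := (by decide : ∀ a b c : ZMod 2, a + b + c = 0 → a + b = c) _ _ _ he
  have h02 : e0 + e2 = e1 := (by decide : ∀ a b c : ZMod 2, a + b + c = 0 → a + c = b) _ _ _ he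
  have h12 : e1 + e2 = e0 := (by decide : ∀ a b c : ZMod 2, a + b + c = 0 → b + c = a) _ _ _ he
  have hx01 : (-1:ℤ)^(e0.val) * (-1:ℤ)^(e1.val) = (-1:ℤ)^(e2.val) := by
    rw [← neg1_zmod2_add, h01]
  have hx10 : (-1:ℤ)^(e1.val) * (-1:ℤ)^(e0.val) = (-1:ℤ)^(e2.val) := by
    rw [mul_comm]; exact hx01
  have hx02 : (-1:ℤ)^(e0.val) * (-1:ℤ)^(e2.val) = (-1:ℤ)^(e1.val) := by
    rw [← neg1_zmod2_add, h02]
  have hx20 : (-1:ℤ)^(e2.val) * (-1:ℤ)^(e0.val) = (-1:ℤ)^(e1.val) := by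
    rw [mul_comm]; exact hx02
  have hx12 : (-1:ℤ)^(e1.val) * (-1:ℤ)^(e2.val) = (-1:ℤ)^(e0.val) := by
    rw [← neg1_zmod2_add, h12]
  have hx21 : (-1:ℤ)^(e2.val) * (-1:ℤ)^(e1.val) = (-1:ℤ)^(e0.val) := by
    rw [mul_comm]; exact hx12
  rcases Nat.even_or_odd τ with hev | hod
  · -- even case
    obtain ⟨σ, hσe⟩ := hev
    have hτeq : τ = 2*σ := by omega
    subst hτeq
    have hσ0 : ((σ:ℕ) : ZMod n) ≠ 0 := by
      intro h0
      have hv := ZMod.val_natCast_of_lt (show σ < n by omega)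
      rw [h0, ZMod.val_zero] at hv
      omega
    have hg := gray_corr (2*n) c d ((2*σ : ℕ) : ZMod (2*n))
    have h1 : binCorr (2*n) c c ((2*σ : ℕ) : ZMod (2*n))
        = binCorr n a a ((σ:ℕ) : ZMod n) + binCorr n b b ((σ:ℕ) : ZMod n) := by
      rw [hc, interleave_binCorr_even hn a (fun i => e0 + b (i + lam)) a
          (fun i => e0 + b (i + lam)) σ,
        binCorr_const_left, binCorr_const_right, binCorr_shift_left, binCorr_shift_right,
        show ((σ:ℕ) : ZMod n) - lam + lam = ((σ:ℕ) : ZMod n) from by ring, neg1_sq_mul]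
    have h2 : binCorr (2*n) d d ((2*σ : ℕ) : ZMod (2*n))
        = binCorr n b b ((σ:ℕ) : ZMod n) + binCorr n a a ((σ:ℕ) : ZMod n) := by
      rw [hd, interleave_binCorr_even hn (fun i => e1 + b i) (fun i => e2 + a (i + lam))
          (fun i => e1 + b i) (fun i => e2 + a (i + lam)) σ,
        binCorr_const_left, binCorr_const_right, binCorr_const_left, binCorr_const_right,
        binCorr_shift_left, binCorr_shift_right,
        show ((σ:ℕ) : ZMod n) - lam + lam = ((σ:ℕ) : ZMod n) from by ring,
        neg1_sq_mul, neg1_sq_mul]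
    have h3 : binCorr (2*n) c d ((2*σ : ℕ) : ZMod (2*n))
        = (-1:ℤ)^(e1.val) * (binCorr n a b ((σ:ℕ) : ZMod n) + binCorr n b a ((σ:ℕ) : ZMod n)) := by
      rw [hc, hd, interleave_binCorr_even hn a (fun i => e0 + b (i + lam))
          (fun i => e1 + b i) (fun i => e2 + a (i + lam)) σ,
        binCorr_const_right, binCorr_const_left, binCorr_const_right,
        binCorr_shift_left, binCorr_shift_right,
        show ((σ:ℕ) : ZMod n) - lam + lam = ((σ:ℕ) : ZMod n) from by ring,
        ← mul_assoc, hx02]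
      ring
    have h4 : binCorr (2*n) d c ((2*σ : ℕ) : ZMod (2*n))
        = (-1:ℤ)^(e1.val) * (binCorr n b a ((σ:ℕ) : ZMod n) + binCorr n a b ((σ:ℕ) : ZMod n)) := by
      rw [hd, hc, interleave_binCorr_even hn (fun i => e1 + b i) (fun i => e2 + a (i + lam))
          a (fun i => e0 + b (i + lam)) σ,
        binCorr_const_left, binCorr_const_left, binCorr_const_right,
        binCorr_shift_left, binCorr_shift_right,
        show ((σ:ℕ) : ZMod n) - lam + lam = ((σ:ℕ) : ZMod n) from by ring,
        ← mul_assoc, hx20]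
      ring
    rw [h1, h2, h3, h4] at hg
    right
    have hEv : ((binCorr n a a ((σ:ℕ) : ZMod n) : ℤ) : ℂ)
        + ((binCorr n b b ((σ:ℕ) : ZMod n) : ℤ) : ℂ) = -2 := by
      exact_mod_cast congrArg (Int.cast : ℤ → ℂ) (hE _ hσ0)
    apply mul_left_cancel₀ (show (2:ℂ) ≠ 0 by norm_num)
    rw [hg]
    push_cast at hEv ⊢
    linear_combination 2 * hEv
  · -- odd case
    obtain ⟨σ, hσe⟩ := hod
    subst hσe
    have hA : ((σ+1 : ℕ) : ZMod n) - lam = ((σ:ℕ) : ZMod n) + lam := by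
      push_cast
      linear_combination (-1 : ZMod n) * hlam2
    have hg := gray_corr (2*n) c d ((2*σ+1 : ℕ) : ZMod (2*n))
    have h1 : binCorr (2*n) c c ((2*σ+1 : ℕ) : ZMod (2*n))
        = (-1:ℤ)^(e0.val) * (binCorr n a b (((σ:ℕ) : ZMod n) + lam)
            + binCorr n b a (((σ:ℕ) : ZMod n) + lam)) := by
      rw [hc, interleave_binCorr_odd hn a (fun i => e0 + b (i + lam)) a
          (fun i => e0 + b (i + lam)) σ,
        binCorr_const_right, binCorr_const_left,
        binCorr_shift_right, binCorr_shift_left, hA]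
      ring
    have h2 : binCorr (2*n) d d ((2*σ+1 : ℕ) : ZMod (2*n))
        = (-1:ℤ)^(e0.val) * (binCorr n b a (((σ:ℕ) : ZMod n) + lam)
            + binCorr n a b (((σ:ℕ) : ZMod n) + lam)) := by
      rw [hd, interleave_binCorr_odd hn (fun i => e1 + b i) (fun i => e2 + a (i + lam))
          (fun i => e1 + b i) (fun i => e2 + a (i + lam)) σ,
        binCorr_const_left, binCorr_const_left, binCorr_const_right, binCorr_const_right,
        binCorr_shift_right, binCorr_shift_left, hA,
        ← mul_assoc, ← mul_assoc, hx12, hx21]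
      ring
    have h3 : binCorr (2*n) c d ((2*σ+1 : ℕ) : ZMod (2*n))
        = (-1:ℤ)^(e2.val) * (binCorr n a a (((σ:ℕ) : ZMod n) + lam)
            + binCorr n b b (((σ:ℕ) : ZMod n) + lam)) := by
      rw [hc, hd, interleave_binCorr_odd hn a (fun i => e0 + b (i + lam))
          (fun i => e1 + b i) (fun i => e2 + a (i + lam)) σ,
        binCorr_const_right, binCorr_const_left, binCorr_const_right,
        binCorr_shift_right, binCorr_shift_left, hA,
        ← mul_assoc, hx01]
      ring
    have h4 : binCorr (2*n) d c ((2*σ+1 : ℕ) : ZMod (2*n))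
        = (-1:ℤ)^(e2.val) * (binCorr n b b (((σ:ℕ) : ZMod n) + lam)
            + binCorr n a a (((σ:ℕ) : ZMod n) + lam)) := by
      rw [hd, hc, interleave_binCorr_odd hn (fun i => e1 + b i) (fun i => e2 + a (i + lam))
          a (fun i => e0 + b (i + lam)) σ,
        binCorr_const_left, binCorr_const_left, binCorr_const_right,
        binCorr_shift_right, binCorr_shift_left, hA,
        ← mul_assoc, hx10]
      ring
    rw [h1, h2, h3, h4] at hg
    have heps : (-1:ℤ)^(e0.val) = 1 ∨ (-1:ℤ)^(e0.val) = -1 := by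
      rcases Nat.even_or_odd e0.val with h | h
      · exact Or.inl (Even.neg_one_pow h)
      · exact Or.inr (Odd.neg_one_pow h)
    rcases hO (((σ:ℕ) : ZMod n) + lam) with hv | hv <;>
      rcases heps with heps | heps <;>
      rw [heps] at hg <;>
      [left; right; right; left] <;>
      · have hv' : ((binCorr n a b (((σ:ℕ) : ZMod n) + lam) : ℤ) : ℂ)
            + ((binCorr n b a (((σ:ℕ) : ZMod n) + lam) : ℤ) : ℂ)
            = ((binCorr n a b (((σ:ℕ) : ZMod n) + lam)
                + binCorr n b a (((σ:ℕ) : ZMod n) + lam) : ℤ) : ℂ) := by push_cast; ring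
        apply mul_left_cancel₀ (show (2:ℂ) ≠ 0 by norm_num)
        rw [hg]
        have hvc := congrArg (Int.cast : ℤ → ℂ) hv
        push_cast at hvc ⊢
        first
        | linear_combination 2 * hvc
        | linear_combination (-2 : ℂ) * hvc

theorem stmt11 (n f : ℕ) (hp : n.Prime) (hnf : n = 4 * f + 1) (hf : Odd f)
    (x y : ℤ) (hxy : (n : ℤ) = x ^ 2 + 4 * y ^ 2) (hy : y = -1)
    (α : ZMod n) (hα : ∀ z : ZMod n, z ≠ 0 → ∃ k : ℕ, z = α ^ k)
    (hTab : ∀ i < 4, ∀ j < 4, 16 * (cycNum n f α i j : ℤ) = oddTable16 (n : ℤ) x y i j)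
    (e0 e1 e2 : ZMod 2) (he : e0 + e1 + e2 = 0)
    (a0 a1 a2 a3 : ZMod n → ZMod 2)
    (ha : (a0, a1, a2, a3) ∈
      ({(cycSeq n f α 0 1, cycSeq n f α 0 2, cycSeq n f α 0 2, cycSeq n f α 0 1),
        (cycSeq n f α 0 2, cycSeq n f α 0 1, cycSeq n f α 0 1, cycSeq n f α 0 2),
        (cycSeq n f α 0 2, cycSeq n f α 2 3, cycSeq n f α 2 3, cycSeq n f α 0 2),
        (cycSeq n f α 2 3, cycSeq n f α 0 2, cycSeq n f α 0 2, cycSeq n f α 2 3),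
        (cycSeq n f α 1 2, cycSeq n f α 1 3, cycSeq n f α 1 3, cycSeq n f α 1 2),
        (cycSeq n f α 1 3, cycSeq n f α 1 2, cycSeq n f α 1 2, cycSeq n f α 1 3),
        (cycSeq n f α 1 3, cycSeq n f α 0 3, cycSeq n f α 0 3, cycSeq n f α 1 3),
        (cycSeq n f α 0 3, cycSeq n f α 1 3, cycSeq n f α 1 3, cycSeq n f α 0 3)} :
        Set ((ZMod n → ZMod 2) × (ZMod n → ZMod 2) × (ZMod n → ZMod 2) × (ZMod n → ZMod 2))))
    (u : ZMod (2 * n) → ZMod 4) (hu : u = constructionI n a0 a1 a2 a3 e0 e1 e2) :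
    ∀ τ : ℕ, 1 ≤ τ → τ < 2 * n →
      quadCorr (2 * n) u u ((τ : ℕ) : ZMod (2 * n)) = 2 ∨
        quadCorr (2 * n) u u ((τ : ℕ) : ZMod (2 * n)) = -2 := by
  haveI : Fact n.Prime := ⟨hp⟩
  have hf1 : 0 < f := hf.pos
  obtain ⟨hα0, hord⟩ := alpha_order hp hnf hα hf1
  have hnz : ∀ m : ℕ, α ^ m ≠ 0 := fun m => pow_ne_zero m hα0
  have hn0 : 0 < n := by omega
  have hodd2 : n % 2 = 1 := by omega
  subst hy
  rw [hu]
  simp only [Set.mem_insert_iff, Set.mem_singleton_iff, Prod.mk.injEq] at ha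
  rcases ha with h | h | h | h | h | h | h | h
  · obtain ⟨h0, h1, h2, h3⟩ := h
    subst h0 h1 h2 h3
    exact main_aux hn0 hodd2 (cycSeq n f α 0 1) (cycSeq n f α 0 2) e0 e1 e2 he
      (fun σ hσ => evenP1 hp hnf hf1 hα hord hnz x hTab σ hσ)
      (fun δ => oddP1 hp hnf hf1 hα hord hnz x hTab δ)
  · obtain ⟨h0, h1, h2, h3⟩ := h
    subst h0 h1 h2 h3
    exact main_aux hn0 hodd2 (cycSeq n f α 0 2) (cycSeq n f α 0 1) e0 e1 e2 he
      (fun σ hσ => by have h := evenP1 hp hnf hf1 hα hord hnz x hTab σ hσ; linarith)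
      (fun δ => by
        rcases oddP1 hp hnf hf1 hα hord hnz x hTab δ with h | h
        · exact Or.inl (by linarith)
        · exact Or.inr (by linarith))
  · obtain ⟨h0, h1, h2, h3⟩ := h
    subst h0 h1 h2 h3
    exact main_aux hn0 hodd2 (cycSeq n f α 0 2) (cycSeq n f α 2 3) e0 e1 e2 he
      (fun σ hσ => evenP2 hp hnf hf1 hα hord hnz x hTab σ hσ)
      (fun δ => oddP2 hp hnf hf1 hα hord hnz x hTab δ)
  · obtain ⟨h0, h1, h2, h3⟩ := h
    subst h0 h1 h2 h3
    exact main_aux hn0 hodd2 (cycSeq n f α 2 3) (cycSeq n f α 0 2) e0 e1 e2 he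
      (fun σ hσ => by have h := evenP2 hp hnf hf1 hα hord hnz x hTab σ hσ; linarith)
      (fun δ => by
        rcases oddP2 hp hnf hf1 hα hord hnz x hTab δ with h | h
        · exact Or.inl (by linarith)
        · exact Or.inr (by linarith))
  · obtain ⟨h0, h1, h2, h3⟩ := h
    subst h0 h1 h2 h3
    exact main_aux hn0 hodd2 (cycSeq n f α 1 2) (cycSeq n f α 1 3) e0 e1 e2 he
      (fun σ hσ => evenP3 hp hnf hf1 hα hord hnz x hTab σ hσ)
      (fun δ => oddP3 hp hnf hf1 hα hord hnz x hTab δ)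
  · obtain ⟨h0, h1, h2, h3⟩ := h
    subst h0 h1 h2 h3
    exact main_aux hn0 hodd2 (cycSeq n f α 1 3) (cycSeq n f α 1 2) e0 e1 e2 he
      (fun σ hσ => by have h := evenP3 hp hnf hf1 hα hord hnz x hTab σ hσ; linarith)
      (fun δ => by
        rcases oddP3 hp hnf hf1 hα hord hnz x hTab δ with h | h
        · exact Or.inl (by linarith)
        · exact Or.inr (by linarith))
  · obtain ⟨h0, h1, h2, h3⟩ := h
    subst h0 h1 h2 h3
    exact main_aux hn0 hodd2 (cycSeq n f α 1 3) (cycSeq n f α 0 3) e0 e1 e2 he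
      (fun σ hσ => evenP4 hp hnf hf1 hα hord hnz x hTab σ hσ)
      (fun δ => oddP4 hp hnf hf1 hα hord hnz x hTab δ)
  · obtain ⟨h0, h1, h2, h3⟩ := h
    subst h0 h1 h2 h3
    exact main_aux hn0 hodd2 (cycSeq n f α 0 3) (cycSeq n f α 1 3) e0 e1 e2 he
      (fun σ hσ => by have h := evenP4 hp hnf hf1 hα hord hnz x hTab σ hσ; linarith)
      (fun δ => by
        rcases oddP4 hp hnf hf1 hα hord hnz x hTab δ with h | h
        · exact Or.inl (by linarith)
        · exact Or.inr (by linarith))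
end

section
/- Let n = 4f+1 be an odd prime, let D_0, D_1, D_2, D_3 be the cyclotomic classes of order 4 with respect to a generator α of (Z/nZ)^*, and let s_1,…,s_6 be the six binary sequences of length n with support sets D_0∪D_1, D_0∪D_2, D_0∪D_3, D_1∪D_2, D_1∪D_3, D_2∪D_3. Then for all 1 ≤ i, j ≤ 6, every k ∈ {0,1,2,3}, every τ ∈ D_k, and every l ∈ D_{k+2 mod 4}: if f is odd then R_{s_i,s_j}(τ) = R_{s_j,s_i}(l), and if f is even then R_{s_i,s_j}(τ) = R_{s_j,s_i}(τ). -/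
section MyHelpers

lemma mySum_range_eq {n : ℕ} [NeZero n] (g : ZMod n → ℤ) :
    ∑ i ∈ Finset.range n, g (i : ZMod n) = ∑ x : ZMod n, g x := by
  have h1 : ∑ i ∈ Finset.range n, g (i : ZMod n) = ∑ i : Fin n, g ((i : ℕ) : ZMod n) :=
    Finset.sum_range (fun i : ℕ => g (i : ZMod n))
  rw [h1]
  refine Fintype.sum_bijective (fun i : Fin n => ((i : ℕ) : ZMod n)) ?_
    (fun i : Fin n => g ((i : ℕ) : ZMod n)) g fun i => rfl
  constructor
  · intro a b hab
    have hv : ((a : ℕ) : ZMod n).val = ((b : ℕ) : ZMod n).val := congrArg ZMod.val hab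
    rw [ZMod.val_cast_of_lt a.isLt, ZMod.val_cast_of_lt b.isLt] at hv
    exact Fin.ext hv
  · intro x
    exact ⟨⟨x.val, x.val_lt⟩, ZMod.natCast_rightInverse x⟩

lemma myBinCorr_univ {n : ℕ} [NeZero n] (s t : ZMod n → ZMod 2) (τ : ZMod n) :
    binCorr n s t τ = ∑ x : ZMod n, (-1 : ℤ) ^ ((s x + t (x + τ)).val) :=
  mySum_range_eq (fun x => (-1 : ℤ) ^ ((s x + t (x + τ)).val))

lemma myBinCorr_swap {n : ℕ} [NeZero n] (s t : ZMod n → ZMod 2) (τ : ZMod n) :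
    binCorr n s t τ = binCorr n t s (-τ) := by
  rw [myBinCorr_univ, myBinCorr_univ]
  refine Fintype.sum_bijective (fun x : ZMod n => x + τ)
    (Equiv.addRight τ).bijective _ _ fun x => ?_
  simp only [add_neg_cancel_right]
  rw [add_comm (s x)]

lemma myBinCorr_mulInv {n : ℕ} [Fact n.Prime] (s t : ZMod n → ZMod 2) (γ τ : ZMod n)
    (hγ : γ ≠ 0) (hs : ∀ x, s (γ * x) = s x) (ht : ∀ x, t (γ * x) = t x) :
    binCorr n s t (γ * τ) = binCorr n s t τ := by
  haveI : NeZero n := ⟨(Fact.out : n.Prime).ne_zero⟩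
  rw [myBinCorr_univ, myBinCorr_univ]
  refine (Fintype.sum_bijective (fun x : ZMod n => γ * x)
    (mulLeft_bijective₀ γ hγ) _ _ fun x => ?_).symm
  rw [hs, ← mul_add, ht]

variable {n f : ℕ} {α : ZMod n}

lemma myPow4_mod (hα4f : α ^ (4 * f) = 1) (a : ℕ) : α ^ (4 * a) = α ^ (4 * (a % f)) := by
  conv_lhs => rw [← Nat.div_add_mod a f]
  rw [Nat.mul_add, pow_add, show 4 * (f * (a / f)) = 4 * f * (a / f) by ring,
    pow_mul, hα4f, one_pow, one_mul]

lemma myMem_pow (hα4f : α ^ (4 * f) = 1) (hf : 0 < f) (a k : ℕ) (hk : k < 4) :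
    α ^ (4 * a + k) ∈ cycClass n f α k := by
  refine ⟨a % f, Nat.mod_lt _ hf, ?_⟩
  rw [pow_add, pow_add, myPow4_mod hα4f a]

lemma myMem_mul (hα4f : α ^ (4 * f) = 1) (hf : 0 < f) (k m : ℕ) (hk : k < 4)
    (x : ZMod n) (hx : x ∈ cycClass n f α k) : α ^ (4 * m) * x ∈ cycClass n f α k := by
  obtain ⟨t, ht, rfl⟩ := hx
  rw [← pow_add, show 4 * m + (4 * t + k) = 4 * (m + t) + k by ring]
  exact myMem_pow hα4f hf (m + t) k hk

lemma myMem_mul_iff (hα4f : α ^ (4 * f) = 1) (hf : 0 < f) (k m : ℕ) (hk : k < 4)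
    (x : ZMod n) : α ^ (4 * m) * x ∈ cycClass n f α k ↔ x ∈ cycClass n f α k := by
  refine ⟨fun h => ?_, myMem_mul hα4f hf k m hk x⟩
  obtain ⟨g, rfl⟩ : ∃ g, f = g + 1 := ⟨f - 1, by omega⟩
  have h2 := myMem_mul hα4f hf k (m * (4 * g + 3)) hk _ h
  rw [← mul_assoc, ← pow_add,
    show 4 * (m * (4 * g + 3)) + 4 * m = 4 * (g + 1) * (4 * m) by ring,
    pow_mul, hα4f, one_pow, one_mul] at h2
  exact h2

lemma myCycSeq_mul (hα4f : α ^ (4 * f) = 1) (hf : 0 < f) (a b m : ℕ)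
    (ha : a < 4) (hb : b < 4) (x : ZMod n) :
    cycSeq n f α a b (α ^ (4 * m) * x) = cycSeq n f α a b x := by
  unfold cycSeq
  have hiff : α ^ (4 * m) * x ∈ cycClass n f α a ∪ cycClass n f α b ↔
      x ∈ cycClass n f α a ∪ cycClass n f α b := by
    simp only [Set.mem_union, myMem_mul_iff hα4f hf _ m ha, myMem_mul_iff hα4f hf _ m hb]
  by_cases hx : x ∈ cycClass n f α a ∪ cycClass n f α b
  · rw [if_pos (hiff.mpr hx), if_pos hx]
  · rw [if_neg (fun h => hx (hiff.mp h)), if_neg hx]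

lemma mySixSeq_mul (hα4f : α ^ (4 * f) = 1) (hf : 0 < f) (i : Fin 6) (m : ℕ) (x : ZMod n) :
    sixSeq n f α i (α ^ (4 * m) * x) = sixSeq n f α i x := by
  fin_cases i <;>
    exact myCycSeq_mul hα4f hf _ _ m (by norm_num) (by norm_num) x

lemma myExists_shift (hα4f : α ^ (4 * f) = 1) (hf : 0 < f) (e e' : ℕ) (h : e % 4 = e' % 4) :
    ∃ M : ℕ, α ^ e' = α ^ (4 * M) * α ^ e := by
  obtain ⟨g, rfl⟩ : ∃ g, f = g + 1 := ⟨f - 1, by omega⟩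
  obtain ⟨q, r, hr, rfl⟩ : ∃ q r, r < 4 ∧ e = 4 * q + r :=
    ⟨e / 4, e % 4, Nat.mod_lt _ (by norm_num), by omega⟩
  obtain ⟨q', rfl⟩ : ∃ q', e' = 4 * q' + r := ⟨e' / 4, by omega⟩
  refine ⟨q' + q * g, ?_⟩
  have key : α ^ (4 * (q' + q * g)) * α ^ (4 * q + r) = α ^ (4 * q' + r) := by
    calc α ^ (4 * (q' + q * g)) * α ^ (4 * q + r)
        = α ^ (4 * (q' + q * g) + (4 * q + r)) := (pow_add α _ _).symm
      _ = α ^ ((4 * q' + r) + 4 * (g + 1) * q) := by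
          rw [show 4 * (q' + q * g) + (4 * q + r) = (4 * q' + r) + 4 * (g + 1) * q from by ring]
      _ = α ^ (4 * q' + r) * (α ^ (4 * (g + 1))) ^ q := by rw [pow_add, pow_mul]
      _ = α ^ (4 * q' + r) := by rw [hα4f, one_pow, mul_one]
  exact key.symm

end MyHelpers


theorem stmt16 (n f : ℕ) (hp : n.Prime) (hnf : n = 4 * f + 1)
    (α : ZMod n) (hα : ∀ z : ZMod n, z ≠ 0 → ∃ k : ℕ, z = α ^ k) :
    ∀ i j : Fin 6, ∀ k < 4, ∀ τ ∈ cycClass n f α k, ∀ l ∈ cycClass n f α ((k + 2) % 4),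
      (Odd f →
        binCorr n (sixSeq n f α i) (sixSeq n f α j) τ =
          binCorr n (sixSeq n f α j) (sixSeq n f α i) l) ∧
      (Even f →
        binCorr n (sixSeq n f α i) (sixSeq n f α j) τ =
          binCorr n (sixSeq n f α j) (sixSeq n f α i) τ) := by
  haveI hfact : Fact n.Prime := ⟨hp⟩
  haveI : NeZero n := ⟨hp.ne_zero⟩
  have hf : 0 < f := by have := hp.two_le; omega
  have hn5 : 5 ≤ n := by omega
  -- α is nonzero
  have hα0 : α ≠ 0 := by
    intro h0
    have h2 : (2 : ZMod n) ≠ 0 := by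
      intro h
      have hdvd := (ZMod.natCast_eq_zero_iff 2 n).mp (by exact_mod_cast h)
      have := Nat.le_of_dvd (by norm_num) hdvd
      omega
    obtain ⟨k, hk⟩ := hα 2 h2
    rcases Nat.eq_zero_or_pos k with hk0 | hk0
    · subst hk0
      simp only [pow_zero] at hk
      have := (ZMod.natCast_eq_natCast_iff 2 1 n).mp (by exact_mod_cast hk)
      have h21 : 2 % n = 1 % n := this
      rw [Nat.mod_eq_of_lt (by omega), Nat.mod_eq_of_lt (by omega)] at h21
      omega
    · rw [h0, zero_pow (by omega)] at hk
      exact h2 hk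
  -- α ^ (4f) = 1
  have hα4f : α ^ (4 * f) = 1 := by
    have hu : IsUnit α := isUnit_iff_ne_zero.mpr hα0
    obtain ⟨u, hu⟩ := hu
    have hcard : Fintype.card (ZMod n)ˣ = 4 * f := by
      rw [ZMod.card_units n]; omega
    have := pow_card_eq_one (x := u) (G := (ZMod n)ˣ)
    rw [hcard] at this
    calc α ^ (4 * f) = ((u ^ (4 * f) : (ZMod n)ˣ) : ZMod n) := by rw [Units.val_pow_eq_pow_val, hu]
      _ = 1 := by rw [this, Units.val_one]
  -- -1 = α ^ (2f)
  have hneg : (-1 : ZMod n) = α ^ (2 * f) := by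
    have hne1 : α ^ (2 * f) ≠ 1 := by
      intro h1
      have hsub : (Finset.univ.erase (0 : ZMod n)) ⊆
          (Finset.range (2 * f)).image (fun k => α ^ k) := by
        intro z hz
        have hz0 : z ≠ 0 := (Finset.mem_erase.mp hz).1
        obtain ⟨k, hk⟩ := hα z hz0
        refine Finset.mem_image.mpr ⟨k % (2 * f), Finset.mem_range.mpr (Nat.mod_lt _ (by omega)), ?_⟩
        have hper : α ^ k = α ^ (k % (2 * f)) := by
          conv_lhs => rw [← Nat.div_add_mod k (2 * f)]
          rw [pow_add, pow_mul, h1, one_pow, one_mul]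
        rw [hk]; exact hper.symm
      have hc1 : (Finset.univ.erase (0 : ZMod n)).card = n - 1 := by
        rw [Finset.card_erase_of_mem (Finset.mem_univ _), Finset.card_univ, ZMod.card]
      have hc2 := Finset.card_le_card hsub
      have hc3 := Finset.card_image_le (s := Finset.range (2 * f)) (f := fun k => α ^ k)
      rw [hc1, Finset.card_range] at *
      omega
    have hsq : (α ^ (2 * f) - 1) * (α ^ (2 * f) + 1) = 0 := by
      have : (α ^ (2 * f)) ^ 2 = 1 := by
        rw [← pow_mul, show 2 * f * 2 = 4 * f by ring, hα4f]
      ring_nf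
      ring_nf at this
      rw [this]
      ring
    rcases mul_eq_zero.mp hsq with h | h
    · exact absurd (by linear_combination h : α ^ (2 * f) = 1) hne1
    · linear_combination -h
  intro i j k hk τ hτ l hl
  obtain ⟨t, ht, rfl⟩ := hτ
  constructor
  · -- odd case
    intro hodd
    obtain ⟨g, hg⟩ := hodd
    obtain ⟨u, hu, rfl⟩ := hl
    have hτe : -(α ^ (4 * t + k)) = α ^ (2 * f + (4 * t + k)) := by
      rw [pow_add α (2 * f), ← hneg, neg_one_mul]
    have hmod : (2 * f + (4 * t + k)) % 4 = (4 * u + (k + 2) % 4) % 4 := by omega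
    obtain ⟨M, hM⟩ := myExists_shift hα4f hf _ _ hmod
    rw [myBinCorr_swap (sixSeq n f α i), hτe, hM,
      myBinCorr_mulInv _ _ _ _ (pow_ne_zero _ hα0)
      (mySixSeq_mul hα4f hf j M) (mySixSeq_mul hα4f hf i M)]
  · -- even case
    intro heven
    obtain ⟨g, hg⟩ := heven
    rw [myBinCorr_swap (sixSeq n f α i)]
    have hτe : -(α ^ (4 * t + k)) = α ^ (4 * g) * α ^ (4 * t + k) := by
      rw [← neg_one_mul, hneg, show 2 * f = 4 * g from by omega]
    rw [hτe, myBinCorr_mulInv _ _ _ _ (pow_ne_zero _ hα0)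
      (mySixSeq_mul hα4f hf j g) (mySixSeq_mul hα4f hf i g)]
end

section
/- Let n = 4f+1 be an odd prime with f odd, and suppose there exist integers x, y with n = x² + 4y² such that the cyclotomic numbers of order 4 with respect to the generator α satisfy the f-odd table. Let s_3 be the binary sequence of length n with support set D_0∪D_3. Then for every 1 ≤ τ < n: R_{s_3}(τ) = 2y − 1 if τ ∈ D_0∪D_2, and R_{s_3}(τ) = −2y − 1 if τ ∈ D_1∪D_3. -/
open Finset

open Finset in
/-- z is in cyclotomic class i (normal form). -/
def Qc {n : ℕ} (α : ZMod n) (i : ℕ) (z : ZMod n) : Prop := ∃ e : ℕ, e % 4 = i ∧ z = α ^ e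

section helpers
variable {n f : ℕ} {α : ZMod n}

lemma st_qc_mem (hf1 : 0 < f)
    (hpow : ∀ a b : ℕ, α ^ a = α ^ b ↔ a % (4*f) = b % (4*f))
    {i : ℕ} (hi : i < 4) (z : ZMod n) :
    z ∈ cycClass n f α i ↔ Qc α i z := by
  constructor
  · rintro ⟨t, ht, rfl⟩
    exact ⟨4*t+i, by omega, rfl⟩
  · rintro ⟨e, he, rfl⟩
    have hmm : e % (4*f) % 4 = e % 4 := Nat.mod_mod_of_dvd e ⟨f, rfl⟩
    have hlt : e % (4*f) < 4*f := Nat.mod_lt _ (by omega)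
    refine ⟨(e % (4*f)) / 4, by omega, ?_⟩
    have h1 : 4 * ((e % (4*f)) / 4) + i = e % (4*f) := by omega
    rw [h1]
    exact ((hpow e (e % (4*f))).mpr (Nat.mod_mod_of_dvd e dvd_rfl).symm)

lemma st_qc_mul {a b : ℕ} {z w : ZMod n} (hz : Qc α a z) (hw : Qc α b w) :
    Qc α ((a+b)%4) (z*w) := by
  obtain ⟨e, he, rfl⟩ := hz
  obtain ⟨e', he', rfl⟩ := hw
  exact ⟨e + e', by omega, (pow_add α e e').symm⟩

lemma st_qc_ne_zero [Fact n.Prime] (hα0 : α ≠ 0) {i : ℕ} {z : ZMod n} (hz : Qc α i z) : z ≠ 0 := by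
  obtain ⟨e, _, rfl⟩ := hz
  exact pow_ne_zero e hα0

lemma st_qc_uniq (hf1 : 0 < f)
    (hpow : ∀ a b : ℕ, α ^ a = α ^ b ↔ a % (4*f) = b % (4*f))
    {a b : ℕ} {z : ZMod n} (ha : a < 4) (hb : b < 4)
    (hza : Qc α a z) (hzb : Qc α b z) : a = b := by
  obtain ⟨e, he, rfl⟩ := hza
  obtain ⟨e', he', hee⟩ := hzb
  have h := (hpow e' e).mp hee.symm
  have h1 : e % (4*f) % 4 = e % 4 := Nat.mod_mod_of_dvd e ⟨f, rfl⟩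
  have h2 : e' % (4*f) % 4 = e' % 4 := Nat.mod_mod_of_dvd e' ⟨f, rfl⟩
  omega

lemma st_qc_inv [Fact n.Prime] (hf1 : 0 < f) (hα0 : α ≠ 0)
    (h1 : α ^ (4*f) = 1) {k : ℕ} {τ : ZMod n} (hτ : Qc α k τ) :
    Qc α ((3*k)%4) τ⁻¹ := by
  obtain ⟨e, he, rfl⟩ := hτ
  obtain ⟨g, hg⟩ : ∃ g, 4*f = g + 1 := ⟨4*f - 1, by omega⟩
  refine ⟨e * g, ?_, ?_⟩
  · have : (e * g) % 4 = (e % 4) * (g % 4) % 4 := Nat.mul_mod e g 4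
    have hg4 : g % 4 = 3 := by omega
    rw [this, hg4, he]
    omega
  · apply inv_eq_of_mul_eq_one_right
    rw [← pow_add]
    have : e + e * g = e * (4*f) := by rw [hg]; ring
    rw [this, mul_comm, pow_mul, h1, one_pow]

end helpers

section helpers2
variable {n f : ℕ} {α : ZMod n}
open Classical in
lemma st_card_class [Fact n.Prime] (hf1 : 0 < f)
    (hpow : ∀ a b : ℕ, α ^ a = α ^ b ↔ a % (4*f) = b % (4*f))
    {i : ℕ} (hi : i < 4) :
    (univ.filter (Qc α i)).card = f := by
  classical
  have himg : (Finset.range f).image (fun t => α ^ (4*t+i)) = univ.filter (Qc α i) := by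
    ext z
    simp only [mem_image, mem_range, mem_filter, mem_univ, true_and]
    constructor
    · rintro ⟨t, ht, rfl⟩; exact ⟨4*t+i, by omega, rfl⟩
    · intro hz
      have := (st_qc_mem hf1 hpow hi z).mpr hz
      obtain ⟨t, ht, hzt⟩ := (st_qc_mem hf1 hpow hi z).mpr hz
      exact ⟨t, ht, hzt.symm⟩
  rw [← himg]
  rw [Finset.card_image_of_injOn, Finset.card_range]
  intro t ht t' ht' h
  simp only [Finset.coe_range, Set.mem_Iio] at ht ht'
  have := (hpow (4*t+i) (4*t'+i)).mp h
  have h1 : 4*t+i < 4*f := by omega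
  have h2 : 4*t'+i < 4*f := by omega
  rw [Nat.mod_eq_of_lt h1, Nat.mod_eq_of_lt h2] at this
  omega

open Classical in
lemma st_cycNum_card [Fact n.Prime] (hf1 : 0 < f)
    (hpow : ∀ a b : ℕ, α ^ a = α ^ b ↔ a % (4*f) = b % (4*f))
    {a b : ℕ} (ha : a < 4) (hb : b < 4) :
    cycNum n f α a b = (univ.filter (fun x : ZMod n => Qc α a (x-1) ∧ Qc α b x)).card := by
  classical
  rw [cycNum, show {x : ZMod n | x - 1 ∈ cycClass n f α a ∧ x ∈ cycClass n f α b}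
      = ↑(univ.filter (fun x : ZMod n => Qc α a (x-1) ∧ Qc α b x)) from ?_,
    Set.ncard_coe_finset]
  ext x
  simp only [Set.mem_setOf_eq, coe_filter, mem_univ, true_and,
    st_qc_mem hf1 hpow ha, st_qc_mem hf1 hpow hb]

open Classical in
lemma st_key [Fact n.Prime] (hf1 : 0 < f) (hα0 : α ≠ 0)
    (hpow : ∀ a b : ℕ, α ^ a = α ^ b ↔ a % (4*f) = b % (4*f))
    (h1 : α ^ (4*f) = 1)
    {τ : ZMod n} {k : ℕ} (hk : k < 4) (hτ : Qc α k τ)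
    {A B a b : ℕ} (hA : A < 4) (hB : B < 4) (ha : a < 4) (hb : b < 4)
    (hak : (a+k)%4 = A) (hbk : (b+k)%4 = B) :
    (univ.filter (fun z : ZMod n => Qc α A z ∧ Qc α B (z+τ))).card = cycNum n f α a b := by
  classical
  have hτ0 : τ ≠ 0 := st_qc_ne_zero hα0 hτ
  rw [st_cycNum_card hf1 hpow ha hb]
  symm
  apply Finset.card_nbij' (i := fun x => τ * (x - 1)) (j := fun z => τ⁻¹ * z + 1)
  · intro x hx
    simp only [mem_coe, mem_filter, mem_univ, true_and] at hx ⊢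
    obtain ⟨h1x, h2x⟩ := hx
    constructor
    · have := st_qc_mul hτ h1x
      rwa [show (k+a)%4 = A by omega] at this
    · have := st_qc_mul hτ h2x
      rw [show (k+b)%4 = B by omega] at this
      rwa [show τ * (x-1) + τ = τ * x by ring]
  · intro z hz
    simp only [mem_coe, mem_filter, mem_univ, true_and] at hz ⊢
    obtain ⟨h1z, h2z⟩ := hz
    have hinv := st_qc_inv hf1 hα0 h1 hτ
    constructor
    · have := st_qc_mul hinv h1z
      rw [show ((3*k)%4 + A)%4 = a by omega] at this
      rwa [add_sub_cancel_right]
    · have := st_qc_mul hinv h2z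
      rw [show ((3*k)%4 + B)%4 = b by omega] at this
      rwa [show τ⁻¹ * (z + τ) = τ⁻¹ * z + 1 by
        rw [mul_add, inv_mul_cancel₀ hτ0]] at this
  · intro x _
    dsimp only
    rw [← mul_assoc, inv_mul_cancel₀ hτ0, one_mul, sub_add_cancel]
  · intro z _
    dsimp only
    rw [add_sub_cancel_right, ← mul_assoc, mul_inv_cancel₀ hτ0, one_mul]
end helpers2

section helpers3
variable {n f : ℕ} {α : ZMod n}

lemma st_corr [Fact n.Prime] (hf1 : 0 < f) (hα0 : α ≠ 0)
    (hpow : ∀ a b : ℕ, α ^ a = α ^ b ↔ a % (4*f) = b % (4*f))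
    (h1 : α ^ (4*f) = 1) (hn : n = 4*f+1)
    {τ : ZMod n} {k : ℕ} (hk : k < 4) (hτ : Qc α k τ) :
    binCorr n (cycSeq n f α 0 3) (cycSeq n f α 0 3) τ
      = (n:ℤ) - 8*(f:ℤ) + 4*((cycNum n f α ((4-k)%4) ((4-k)%4) : ℤ)
          + (cycNum n f α ((4-k)%4) ((7-k)%4) : ℤ)
          + (cycNum n f α ((7-k)%4) ((4-k)%4) : ℤ)
          + (cycNum n f α ((7-k)%4) ((7-k)%4) : ℤ)) := by
  classical
  set a := (4-k)%4 with hadef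
  set b := (7-k)%4 with hbdef
  have ha : a < 4 := by omega
  have hb : b < 4 := by omega
  have hak : (a+k)%4 = 0 := by omega
  have hbk : (b+k)%4 = 3 := by omega
  set C : ZMod n → Prop := fun z => Qc α 0 z ∨ Qc α 3 z with hCdef
  have hseq : ∀ z : ZMod n, cycSeq n f α 0 3 z = if C z then 1 else 0 := by
    intro z
    have hmem : z ∈ cycClass n f α 0 ∪ cycClass n f α 3 ↔ C z := by
      rw [Set.mem_union, st_qc_mem hf1 hpow (by norm_num) z,
        st_qc_mem hf1 hpow (by norm_num) z]
    by_cases h : C z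
    · rw [cycSeq, if_pos (hmem.mpr h), if_pos h]
    · rw [cycSeq, if_neg (fun hh => h (hmem.mp hh)), if_neg h]
  set ind : ZMod n → ℤ := fun z => if C z then 1 else 0 with hinddef
  have hre : binCorr n (cycSeq n f α 0 3) (cycSeq n f α 0 3) τ
      = ∑ z : ZMod n, (1 - 2 * ind z) * (1 - 2 * ind (z+τ)) := by
    rw [binCorr]
    apply Finset.sum_nbij' (i := fun m : ℕ => ((m : ℕ) : ZMod n)) (j := fun z : ZMod n => z.val)
    · intro m _; exact mem_univ _
    · intro z _; exact mem_range.mpr (ZMod.val_lt z)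
    · intro m hm; exact ZMod.val_natCast_of_lt (mem_range.mp hm)
    · intro z _; exact ZMod.natCast_rightInverse z
    · intro m _
      rw [hseq, hseq]
      by_cases h1m : C ((m : ℕ) : ZMod n) <;> by_cases h2m : C (((m : ℕ) : ZMod n) + τ) <;>
        simp only [h1m, h2m, hinddef, if_true, if_false] <;>
        norm_num [show (2:ZMod 2).val = 0 from rfl, show (1:ZMod 2).val = 1 from rfl,
          show (0:ZMod 2).val = 0 from rfl]
  rw [hre]
  have hptw : ∀ z : ZMod n, (1 - 2 * ind z) * (1 - 2 * ind (z+τ))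
      = 1 - 2 * ind z - 2 * ind (z+τ) + 4 * (if C z ∧ C (z+τ) then (1:ℤ) else 0) := by
    intro z
    by_cases h1z : C z <;> by_cases h2z : C (z+τ) <;>
      simp [hinddef, h1z, h2z] <;> ring
  rw [Finset.sum_congr rfl (fun z _ => hptw z)]
  have hS2 : ∑ z : ZMod n, ind z = ((univ.filter C).card : ℤ) := by
    rw [hinddef]; exact Finset.sum_boole _ _
  have hS3 : ∑ z : ZMod n, ind (z+τ) = ((univ.filter C).card : ℤ) := by
    rw [← hS2]
    exact Fintype.sum_equiv (Equiv.addRight τ) _ _ (fun z => rfl)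
  have hS4 : ∑ z : ZMod n, (if C z ∧ C (z+τ) then (1:ℤ) else 0)
      = ((univ.filter (fun z => C z ∧ C (z+τ))).card : ℤ) := Finset.sum_boole _ _
  rw [Finset.sum_add_distrib, Finset.sum_sub_distrib, Finset.sum_sub_distrib,
    ← Finset.mul_sum, ← Finset.mul_sum, ← Finset.mul_sum, hS2, hS3, hS4,
    Finset.sum_const, card_univ, ZMod.card]
  -- |C| = 2f
  have hdisj03 : Disjoint (univ.filter (Qc α 0)) (univ.filter (Qc α 3)) := by
    rw [Finset.disjoint_left]
    intro z hz0 hz3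
    simp only [mem_filter, mem_univ, true_and] at hz0 hz3
    exact absurd (st_qc_uniq hf1 hpow (by norm_num) (by norm_num) hz0 hz3) (by norm_num)
  have hCcard : (univ.filter C).card = 2 * f := by
    have hsplit : univ.filter C = univ.filter (Qc α 0) ∪ univ.filter (Qc α 3) := by
      ext z
      simp only [mem_filter, mem_union, mem_univ, true_and, hCdef]
    rw [hsplit, Finset.card_union_of_disjoint hdisj03,
      st_card_class hf1 hpow (by norm_num), st_card_class hf1 hpow (by norm_num)]
    ring
  -- N decomposition
  set F : ℕ → ℕ → Finset (ZMod n) :=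
    fun A B => univ.filter (fun z => Qc α A z ∧ Qc α B (z+τ)) with hFdef
  have hdisj' : ∀ A B A' B', (A < 4) → (A' < 4) → (B < 4) → (B' < 4) →
      (A ≠ A' ∨ B ≠ B') → Disjoint (F A B) (F A' B') := by
    intro A B A' B' hA hA' hB hB' hne
    rw [Finset.disjoint_left]
    intro z hz hz'
    simp only [hFdef, mem_filter, mem_univ, true_and] at hz hz'
    rcases hne with h | h
    · exact h (st_qc_uniq hf1 hpow hA hA' hz.1 hz'.1)
    · exact h (st_qc_uniq hf1 hpow hB hB' hz.2 hz'.2)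
  have hNsplit : (univ.filter (fun z => C z ∧ C (z+τ))).card
      = (F 0 0).card + (F 0 3).card + (F 3 0).card + (F 3 3).card := by
    have hun : univ.filter (fun z => C z ∧ C (z+τ))
        = ((F 0 0) ∪ (F 0 3)) ∪ ((F 3 0) ∪ (F 3 3)) := by
      ext z
      simp only [hFdef, hCdef, mem_filter, mem_union, mem_univ, true_and]
      tauto
    rw [hun, Finset.card_union_of_disjoint, Finset.card_union_of_disjoint,
      Finset.card_union_of_disjoint]
    · ring
    · exact hdisj' 3 0 3 3 (by norm_num) (by norm_num) (by norm_num) (by norm_num) (by tauto)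
    · exact hdisj' 0 0 0 3 (by norm_num) (by norm_num) (by norm_num) (by norm_num) (by tauto)
    · apply Finset.disjoint_union_right.mpr
      constructor <;> apply Finset.disjoint_union_left.mpr <;> constructor
      · exact hdisj' 0 0 3 0 (by norm_num) (by norm_num) (by norm_num) (by norm_num) (by tauto)
      · exact hdisj' 0 3 3 0 (by norm_num) (by norm_num) (by norm_num) (by norm_num) (by tauto)
      · exact hdisj' 0 0 3 3 (by norm_num) (by norm_num) (by norm_num) (by norm_num) (by tauto)
      · exact hdisj' 0 3 3 3 (by norm_num) (by norm_num) (by norm_num) (by norm_num) (by tauto)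
  have h00 : (F 0 0).card = cycNum n f α a a :=
    st_key hf1 hα0 hpow h1 hk hτ (by norm_num) (by norm_num) ha ha hak hak
  have h03 : (F 0 3).card = cycNum n f α a b :=
    st_key hf1 hα0 hpow h1 hk hτ (by norm_num) (by norm_num) ha hb hak hbk
  have h30 : (F 3 0).card = cycNum n f α b a :=
    st_key hf1 hα0 hpow h1 hk hτ (by norm_num) (by norm_num) hb ha hbk hak
  have h33 : (F 3 3).card = cycNum n f α b b :=
    st_key hf1 hα0 hpow h1 hk hτ (by norm_num) (by norm_num) hb hb hbk hbk
  rw [hNsplit, h00, h03, h30, h33, hCcard]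
  push_cast
  ring
end helpers3


set_option maxHeartbeats 2000000 in
theorem stmt17 (n f : ℕ) (hp : n.Prime) (hnf : n = 4 * f + 1) (hf : Odd f)
    (x y : ℤ) (hxy : (n : ℤ) = x ^ 2 + 4 * y ^ 2)
    (α : ZMod n) (hα : ∀ z : ZMod n, z ≠ 0 → ∃ k : ℕ, z = α ^ k)
    (hTab : ∀ i < 4, ∀ j < 4, 16 * (cycNum n f α i j : ℤ) = oddTable16 (n : ℤ) x y i j) :
    ∀ τ : ℕ, 1 ≤ τ → τ < n →
      (((τ : ZMod n) ∈ cycClass n f α 0 ∪ cycClass n f α 2) →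
        binCorr n (cycSeq n f α 0 3) (cycSeq n f α 0 3) (τ : ZMod n) = 2 * y - 1) ∧
      (((τ : ZMod n) ∈ cycClass n f α 1 ∪ cycClass n f α 3) →
        binCorr n (cycSeq n f α 0 3) (cycSeq n f α 0 3) (τ : ZMod n) = -2 * y - 1) := by
  
  classical
  have hf1 : 0 < f := hf.pos
  have hn5 : 5 ≤ n := by omega
  haveI : Fact n.Prime := ⟨hp⟩
  have hα0 : α ≠ 0 := by
    intro hz
    obtain ⟨k, hk⟩ := hα (-1) (neg_ne_zero.mpr one_ne_zero)
    rcases Nat.eq_zero_or_pos k with rfl | hkpos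
    · rw [pow_zero] at hk
      have h2 : ((2 : ℕ) : ZMod n) = 0 := by push_cast; linear_combination -hk
      have hdvd := (ZMod.natCast_eq_zero_iff 2 n).mp h2
      have := Nat.le_of_dvd (by norm_num) hdvd
      omega
    · rw [hz, zero_pow (by omega : k ≠ 0)] at hk
      exact (neg_ne_zero.mpr one_ne_zero) hk
  set u : (ZMod n)ˣ := Units.mk0 α hα0 with hudef
  have hgen : ∀ g : (ZMod n)ˣ, g ∈ Subgroup.zpowers u := by
    intro g
    obtain ⟨k, hk⟩ := hα g g.ne_zero
    rw [Subgroup.mem_zpowers_iff]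
    refine ⟨(k : ℤ), ?_⟩
    rw [zpow_natCast]
    apply Units.ext
    rw [Units.val_pow_eq_pow_val]
    exact hk.symm
  have hordu : orderOf u = 4*f := by
    rw [orderOf_eq_card_of_forall_mem_zpowers hgen, Nat.card_eq_fintype_card,
      ZMod.card_units_eq_totient, Nat.totient_prime hp]
    omega
  have hpow : ∀ a b : ℕ, α ^ a = α ^ b ↔ a % (4*f) = b % (4*f) := by
    intro a b
    have hiff : α ^ a = α ^ b ↔ u ^ a = u ^ b := by
      rw [Units.ext_iff, Units.val_pow_eq_pow_val, Units.val_pow_eq_pow_val]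
      exact Iff.rfl
    rw [hiff, pow_inj_mod, hordu]
  have h1 : α ^ (4*f) = 1 := by
    have h := (hpow (4*f) 0).mpr (by simp)
    simpa using h
  have hnZ : (n:ℤ) = 4*(f:ℤ)+1 := by exact_mod_cast hnf
  -- table entries
  have t00 := hTab 0 (by norm_num) 0 (by norm_num)
  have t01 := hTab 0 (by norm_num) 1 (by norm_num)
  have t03 := hTab 0 (by norm_num) 3 (by norm_num)
  have t10 := hTab 1 (by norm_num) 0 (by norm_num)
  have t11 := hTab 1 (by norm_num) 1 (by norm_num)
  have t12 := hTab 1 (by norm_num) 2 (by norm_num)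
  have t21 := hTab 2 (by norm_num) 1 (by norm_num)
  have t22 := hTab 2 (by norm_num) 2 (by norm_num)
  have t23 := hTab 2 (by norm_num) 3 (by norm_num)
  have t30 := hTab 3 (by norm_num) 0 (by norm_num)
  have t32 := hTab 3 (by norm_num) 2 (by norm_num)
  have t33 := hTab 3 (by norm_num) 3 (by norm_num)
  simp only [oddTable16] at t00 t01 t03 t10 t11 t12 t21 t22 t23 t30 t32 t33
  intro τ hτ1 hτn
  have hτ0 : (τ : ZMod n) ≠ 0 := by
    intro h
    have hdvd := (ZMod.natCast_eq_zero_iff τ n).mp h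
    have := Nat.le_of_dvd (by omega) hdvd
    omega
  constructor
  · rintro (h0 | h2)
    · have hQ : Qc α 0 ((τ:ℕ) : ZMod n) := (st_qc_mem hf1 hpow (by norm_num) _).mp h0
      have hc := st_corr hf1 hα0 hpow h1 hnf (by norm_num : (0:ℕ) < 4) hQ
      norm_num at hc
      linarith [hc, t00, t03, t30, t33]
    · have hQ : Qc α 2 ((τ:ℕ) : ZMod n) := (st_qc_mem hf1 hpow (by norm_num) _).mp h2
      have hc := st_corr hf1 hα0 hpow h1 hnf (by norm_num : (2:ℕ) < 4) hQ
      norm_num at hc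
      linarith [hc, t22, t21, t12, t11]
  · rintro (h0 | h2)
    · have hQ : Qc α 1 ((τ:ℕ) : ZMod n) := (st_qc_mem hf1 hpow (by norm_num) _).mp h0
      have hc := st_corr hf1 hα0 hpow h1 hnf (by norm_num : (1:ℕ) < 4) hQ
      norm_num at hc
      linarith [hc, t33, t32, t23, t22]
    · have hQ : Qc α 3 ((τ:ℕ) : ZMod n) := (st_qc_mem hf1 hpow (by norm_num) _).mp h2
      have hc := st_corr hf1 hα0 hpow h1 hnf (by norm_num : (3:ℕ) < 4) hQ
      norm_num at hc
      linarith [hc, t11, t10, t01, t00]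
end
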